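/- arXiv:1102.0405 — 4 statements merged into one kernel-verified Lean document; each statement's English description precedes it below -/
import Mathlib

section
/- Suppose h is a strictly positive continuous weight function on (0,1) with 0 < B_h = ∫₀¹ (log y)² h(y) dy < ∞, and C is a copula with C ≥ Π. Then M_h(C,A*) = 0 (where A* is the minimizer of M_h(C,·)) if and only if there exists a function A: [0,1] → ℝ such that C(y^{1-t},y^t) = y^{A(t)} for all t ∈ [0,1] and almost every y ∈ (0,1). -/
open MeasureTheory Set intervalIntegral

def IsCopula (C : ℝ → ℝ → ℝ) : Prop :=
  (∀ u ∈ Set.Icc (0:ℝ) 1, C u 0 = 0 ∧ C u 1 = u) ∧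
  (∀ v ∈ Set.Icc (0:ℝ) 1, C 0 v = 0 ∧ C 1 v = v) ∧
  (∀ u₁ u₂ v₁ v₂ : ℝ, u₁ ∈ Set.Icc (0:ℝ) 1 → u₂ ∈ Set.Icc (0:ℝ) 1 →
    v₁ ∈ Set.Icc (0:ℝ) 1 → v₂ ∈ Set.Icc (0:ℝ) 1 → u₁ ≤ u₂ → v₁ ≤ v₂ →
    0 ≤ C u₂ v₂ - C u₂ v₁ - C u₁ v₂ + C u₁ v₁)

variable {C : ℝ → ℝ → ℝ}

lemma mem01 : (0:ℝ) ∈ Icc (0:ℝ) 1 := ⟨le_refl 0, zero_le_one⟩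
lemma mem11 : (1:ℝ) ∈ Icc (0:ℝ) 1 := ⟨zero_le_one, le_refl 1⟩

lemma cop_mono_v (hC : IsCopula C) {u v₁ v₂ : ℝ} (hu : u ∈ Icc (0:ℝ) 1)
    (h1 : v₁ ∈ Icc (0:ℝ) 1) (h2 : v₂ ∈ Icc (0:ℝ) 1) (hle : v₁ ≤ v₂) :
    C u v₁ ≤ C u v₂ := by
  have := hC.2.2 0 u v₁ v₂ mem01 hu h1 h2 hu.1 hle
  have e1 := (hC.2.1 v₁ h1).1
  have e2 := (hC.2.1 v₂ h2).1
  linarith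

lemma cop_mono_u (hC : IsCopula C) {u₁ u₂ v : ℝ} (h1 : u₁ ∈ Icc (0:ℝ) 1)
    (h2 : u₂ ∈ Icc (0:ℝ) 1) (hv : v ∈ Icc (0:ℝ) 1) (hle : u₁ ≤ u₂) :
    C u₁ v ≤ C u₂ v := by
  have := hC.2.2 u₁ u₂ 0 v h1 h2 mem01 hv hle hv.1
  have e1 := (hC.1 u₁ h1).1
  have e2 := (hC.1 u₂ h2).1
  linarith

lemma cop_diff_u (hC : IsCopula C) {u₁ u₂ v : ℝ} (h1 : u₁ ∈ Icc (0:ℝ) 1)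
    (h2 : u₂ ∈ Icc (0:ℝ) 1) (hv : v ∈ Icc (0:ℝ) 1) (hle : u₁ ≤ u₂) :
    C u₂ v - C u₁ v ≤ u₂ - u₁ := by
  have := hC.2.2 u₁ u₂ v 1 h1 h2 hv mem11 hle hv.2
  have e1 := (hC.1 u₁ h1).2
  have e2 := (hC.1 u₂ h2).2
  linarith

lemma cop_diff_v (hC : IsCopula C) {u v₁ v₂ : ℝ} (hu : u ∈ Icc (0:ℝ) 1)
    (h1 : v₁ ∈ Icc (0:ℝ) 1) (h2 : v₂ ∈ Icc (0:ℝ) 1) (hle : v₁ ≤ v₂) :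
    C u v₂ - C u v₁ ≤ v₂ - v₁ := by
  have := hC.2.2 u 1 v₁ v₂ hu mem11 h1 h2 hu.2 hle
  have e1 := (hC.2.1 v₁ h1).2
  have e2 := (hC.2.1 v₂ h2).2
  linarith

lemma cop_le_one (hC : IsCopula C) {u v : ℝ} (hu : u ∈ Icc (0:ℝ) 1)
    (hv : v ∈ Icc (0:ℝ) 1) : C u v ≤ 1 := by
  have h1 : C u v ≤ C u 1 := cop_mono_v hC hu hv mem11 hv.2
  rw [(hC.1 u hu).2] at h1
  exact h1.trans hu.2

lemma cop_abs_diff_u (hC : IsCopula C) {u₁ u₂ v : ℝ} (h1 : u₁ ∈ Icc (0:ℝ) 1)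
    (h2 : u₂ ∈ Icc (0:ℝ) 1) (hv : v ∈ Icc (0:ℝ) 1) :
    |C u₂ v - C u₁ v| ≤ |u₂ - u₁| := by
  rcases le_total u₁ u₂ with hle | hle
  · rw [abs_of_nonneg (by linarith [cop_mono_u hC h1 h2 hv hle]),
      abs_of_nonneg (by linarith)]
    exact cop_diff_u hC h1 h2 hv hle
  · rw [abs_sub_comm, abs_sub_comm u₂ u₁,
      abs_of_nonneg (by linarith [cop_mono_u hC h2 h1 hv hle]),
      abs_of_nonneg (by linarith)]
    exact cop_diff_u hC h2 h1 hv hle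

lemma cop_abs_diff_v (hC : IsCopula C) {u v₁ v₂ : ℝ} (hu : u ∈ Icc (0:ℝ) 1)
    (h1 : v₁ ∈ Icc (0:ℝ) 1) (h2 : v₂ ∈ Icc (0:ℝ) 1) :
    |C u v₂ - C u v₁| ≤ |v₂ - v₁| := by
  rcases le_total v₁ v₂ with hle | hle
  · rw [abs_of_nonneg (by linarith [cop_mono_v hC hu h1 h2 hle]),
      abs_of_nonneg (by linarith)]
    exact cop_diff_v hC hu h1 h2 hle
  · rw [abs_sub_comm, abs_sub_comm v₂ v₁,
      abs_of_nonneg (by linarith [cop_mono_v hC hu h2 h1 hle]),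
      abs_of_nonneg (by linarith)]
    exact cop_diff_v hC hu h2 h1 hle

lemma cop_continuousOn (hC : IsCopula C) :
    ContinuousOn (fun p : ℝ × ℝ => C p.1 p.2) (Icc (0:ℝ) 1 ×ˢ Icc (0:ℝ) 1) := by
  have hlip : LipschitzOnWith 2 (fun p : ℝ × ℝ => C p.1 p.2)
      (Icc (0:ℝ) 1 ×ˢ Icc (0:ℝ) 1) := by
    rw [lipschitzOnWith_iff_dist_le_mul]
    rintro ⟨u₂, v₂⟩ ⟨hu₂, hv₂⟩ ⟨u₁, v₁⟩ ⟨hu₁, hv₁⟩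
    simp only [Real.dist_eq, Prod.dist_eq]
    have h1 : |C u₂ v₂ - C u₁ v₁| ≤ |u₂ - u₁| + |v₂ - v₁| := by
      calc |C u₂ v₂ - C u₁ v₁|
          ≤ |C u₂ v₂ - C u₁ v₂| + |C u₁ v₂ - C u₁ v₁| := by
            
            exact abs_sub_le _ _ _
        _ ≤ |u₂ - u₁| + |v₂ - v₁| :=
            add_le_add (cop_abs_diff_u hC hu₁ hu₂ hv₂) (cop_abs_diff_v hC hu₁ hv₁ hv₂)
    have h2 : |u₂ - u₁| ≤ max (dist u₂ u₁) (dist v₂ v₁) := le_max_of_le_left (by rw [Real.dist_eq])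
    have h3 : |v₂ - v₁| ≤ max (dist u₂ u₁) (dist v₂ v₁) := le_max_of_le_right (by rw [Real.dist_eq])
    push_cast
    calc |C u₂ v₂ - C u₁ v₁| ≤ |u₂ - u₁| + |v₂ - v₁| := h1
      _ ≤ 2 * max |u₂ - u₁| |v₂ - v₁| := by
          rw [two_mul]
          exact add_le_add (le_max_left _ _) (le_max_right _ _)
  exact hlip.continuousOn


lemma rpow_Icc {y s : ℝ} (h0 : 0 < y) (h1 : y ≤ 1) (hs : 0 ≤ s) :
    y ^ s ∈ Icc (0:ℝ) 1 :=
  ⟨(Real.rpow_pos_of_pos h0 s).le, Real.rpow_le_one h0.le h1 hs⟩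

section Bounds

variable {C : ℝ → ℝ → ℝ}

lemma cop_lb (hC : IsCopula C)
    (hPi : ∀ u ∈ Set.Icc (0:ℝ) 1, ∀ v ∈ Set.Icc (0:ℝ) 1, u * v ≤ C u v)
    {t y : ℝ} (ht : t ∈ Icc (0:ℝ) 1) (hy : y ∈ Ioo (0:ℝ) 1) :
    y ≤ C (y ^ (1 - t)) (y ^ t) := by
  have h1 : y ^ (1 - t) ∈ Icc (0:ℝ) 1 := rpow_Icc hy.1 hy.2.le (by linarith [ht.2])
  have h2 : y ^ t ∈ Icc (0:ℝ) 1 := rpow_Icc hy.1 hy.2.le ht.1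
  have := hPi _ h1 _ h2
  rwa [← Real.rpow_add hy.1, sub_add_cancel, Real.rpow_one] at this

lemma cop_ub (hC : IsCopula C) {t y : ℝ} (ht : t ∈ Icc (0:ℝ) 1) (hy : y ∈ Ioo (0:ℝ) 1) :
    C (y ^ (1 - t)) (y ^ t) ≤ 1 :=
  cop_le_one hC (rpow_Icc hy.1 hy.2.le (by linarith [ht.2])) (rpow_Icc hy.1 hy.2.le ht.1)

/-- bounds on log of the diagonal -/
lemma logC_bounds (hC : IsCopula C)
    (hPi : ∀ u ∈ Set.Icc (0:ℝ) 1, ∀ v ∈ Set.Icc (0:ℝ) 1, u * v ≤ C u v)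
    {t y : ℝ} (ht : t ∈ Icc (0:ℝ) 1) (hy : y ∈ Ioo (0:ℝ) 1) :
    Real.log y ≤ Real.log (C (y ^ (1 - t)) (y ^ t)) ∧
      Real.log (C (y ^ (1 - t)) (y ^ t)) ≤ 0 := by
  have hCl := cop_lb hC hPi ht hy
  have hCu := cop_ub hC ht hy
  constructor
  · exact (Real.log_le_log_iff hy.1 (hy.1.trans_le hCl)).mpr hCl
  · exact Real.log_nonpos (hy.1.trans_le hCl).le hCu

lemma abs_logC_le (hC : IsCopula C)
    (hPi : ∀ u ∈ Set.Icc (0:ℝ) 1, ∀ v ∈ Set.Icc (0:ℝ) 1, u * v ≤ C u v)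
    {t y : ℝ} (ht : t ∈ Icc (0:ℝ) 1) (hy : y ∈ Ioo (0:ℝ) 1) :
    |Real.log (C (y ^ (1 - t)) (y ^ t))| ≤ |Real.log y| := by
  obtain ⟨h1, h2⟩ := logC_bounds hC hPi ht hy
  have hl : Real.log y < 0 := Real.log_neg hy.1 hy.2
  rw [abs_of_nonpos h2, abs_of_nonpos hl.le]
  linarith

/-- continuity in y of the diagonal log, on (0,1), for t ∈ [0,1] -/
lemma contOn_F_y (hC : IsCopula C)
    (hPi : ∀ u ∈ Set.Icc (0:ℝ) 1, ∀ v ∈ Set.Icc (0:ℝ) 1, u * v ≤ C u v)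
    {t : ℝ} (ht : t ∈ Icc (0:ℝ) 1) :
    ContinuousOn (fun y => Real.log (C (y ^ (1 - t)) (y ^ t))) (Ioo (0:ℝ) 1) := by
  have hin : ContinuousOn (fun y : ℝ => ((y ^ (1 - t) : ℝ), (y ^ t : ℝ))) (Ioo (0:ℝ) 1) := by
    apply ContinuousOn.prodMk
    · exact fun y hy => (Real.continuousAt_rpow_const y (1 - t) (Or.inl hy.1.ne')).continuousWithinAt
    · exact fun y hy => (Real.continuousAt_rpow_const y t (Or.inl hy.1.ne')).continuousWithinAt
  have hmaps : MapsTo (fun y : ℝ => ((y ^ (1 - t) : ℝ), (y ^ t : ℝ))) (Ioo (0:ℝ) 1)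
      (Icc (0:ℝ) 1 ×ˢ Icc (0:ℝ) 1) := fun y hy =>
    ⟨rpow_Icc hy.1 hy.2.le (by linarith [ht.2]), rpow_Icc hy.1 hy.2.le ht.1⟩
  have hc : ContinuousOn (fun y => C (y ^ (1 - t)) (y ^ t)) (Ioo (0:ℝ) 1) :=
    (cop_continuousOn hC).comp hin hmaps
  exact hc.log fun y hy => by
    have := cop_lb hC hPi ht hy
    linarith [hy.1]

/-- continuity in t of the diagonal log, on [0,1], for y ∈ (0,1) -/
lemma contOn_F_t (hC : IsCopula C)
    (hPi : ∀ u ∈ Set.Icc (0:ℝ) 1, ∀ v ∈ Set.Icc (0:ℝ) 1, u * v ≤ C u v)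
    {y : ℝ} (hy : y ∈ Ioo (0:ℝ) 1) :
    ContinuousOn (fun t => Real.log (C (y ^ (1 - t)) (y ^ t))) (Icc (0:ℝ) 1) := by
  have hrc : ∀ s : ℝ → ℝ, Continuous s → Continuous (fun t : ℝ => y ^ (s t)) := by
    intro s hs
    have : (fun t : ℝ => y ^ (s t)) = fun t => Real.exp (Real.log y * s t) := by
      funext t; rw [Real.rpow_def_of_pos hy.1]
    rw [this]
    exact Real.continuous_exp.comp (continuous_const.mul hs)
  have hin : ContinuousOn (fun t : ℝ => ((y ^ (1 - t) : ℝ), (y ^ t : ℝ))) (Icc (0:ℝ) 1) :=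
    (((hrc _ (continuous_const.sub continuous_id)).prodMk (hrc _ continuous_id))).continuousOn
  have hmaps : MapsTo (fun t : ℝ => ((y ^ (1 - t) : ℝ), (y ^ t : ℝ))) (Icc (0:ℝ) 1)
      (Icc (0:ℝ) 1 ×ˢ Icc (0:ℝ) 1) := fun t ht =>
    ⟨rpow_Icc hy.1 hy.2.le (by linarith [ht.2]), rpow_Icc hy.1 hy.2.le ht.1⟩
  have hc : ContinuousOn (fun t => C (y ^ (1 - t)) (y ^ t)) (Icc (0:ℝ) 1) :=
    (cop_continuousOn hC).comp hin hmaps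
  exact hc.log fun t ht => by
    have := cop_lb hC hPi ht hy
    linarith [hy.1]

end Bounds

lemma restrict_Ioo_eq : volume.restrict (Ioo (0:ℝ) 1) = volume.restrict (Ioc (0:ℝ) 1) :=
  Measure.restrict_congr_set Ioo_ae_eq_Ioc

lemma ae_mem_Ioo : ∀ᵐ y ∂(volume.restrict (Ioc (0:ℝ) 1)), y ∈ Ioo (0:ℝ) 1 := by
  rw [← restrict_Ioo_eq]
  exact ae_restrict_mem measurableSet_Ioo

lemma aesm_Ioo {f : ℝ → ℝ} (hf : ContinuousOn f (Ioo (0:ℝ) 1)) :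
    AEStronglyMeasurable f (volume.restrict (Ioc (0:ℝ) 1)) := by
  rw [← restrict_Ioo_eq]
  exact hf.aestronglyMeasurable measurableSet_Ioo

section Main

variable {C : ℝ → ℝ → ℝ} {h : ℝ → ℝ}

lemma log_ne_zero_Ioo {y : ℝ} (hy : y ∈ Ioo (0:ℝ) 1) : Real.log y ≠ 0 :=
  (Real.log_neg hy.1 hy.2).ne

/-- continuity in y of the function inside the Astar integral -/
lemma q_contOn (hC : IsCopula C)
    (hPi : ∀ u ∈ Set.Icc (0:ℝ) 1, ∀ v ∈ Set.Icc (0:ℝ) 1, u * v ≤ C u v)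
    (hcont : ContinuousOn h (Set.Ioo 0 1)) {t : ℝ} (ht : t ∈ Icc (0:ℝ) 1) :
    ContinuousOn (fun y => (Real.log (C (y ^ (1 - t)) (y ^ t)) / Real.log y) *
      ((Real.log y) ^ 2 * h y)) (Ioo (0:ℝ) 1) := by
  have hlog : ContinuousOn Real.log (Ioo (0:ℝ) 1) :=
    fun y hy => (Real.continuousAt_log hy.1.ne').continuousWithinAt
  exact ((contOn_F_y hC hPi ht).div hlog (fun y hy => log_ne_zero_Ioo hy)).mul
    ((hlog.pow 2).mul hcont)

lemma q_bound (hC : IsCopula C)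
    (hPi : ∀ u ∈ Set.Icc (0:ℝ) 1, ∀ v ∈ Set.Icc (0:ℝ) 1, u * v ≤ C u v)
    (hpos : ∀ y ∈ Set.Ioo (0:ℝ) 1, 0 < h y) {t : ℝ} (ht : t ∈ Icc (0:ℝ) 1)
    {y : ℝ} (hy : y ∈ Ioo (0:ℝ) 1) :
    ‖(Real.log (C (y ^ (1 - t)) (y ^ t)) / Real.log y) * ((Real.log y) ^ 2 * h y)‖ ≤
      (Real.log y) ^ 2 * h y := by
  have hq : |Real.log (C (y ^ (1 - t)) (y ^ t)) / Real.log y| ≤ 1 := by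
    rw [abs_div]
    exact div_le_one_of_le₀ (abs_logC_le hC hPi ht hy) (abs_nonneg _)
  have hw : 0 ≤ (Real.log y) ^ 2 * h y :=
    mul_nonneg (sq_nonneg _) (hpos y hy).le
  rw [Real.norm_eq_abs, abs_mul, abs_of_nonneg hw]
  calc |Real.log (C (y ^ (1 - t)) (y ^ t)) / Real.log y| * ((Real.log y) ^ 2 * h y)
      ≤ 1 * ((Real.log y) ^ 2 * h y) := mul_le_mul_of_nonneg_right hq hw
    _ = (Real.log y) ^ 2 * h y := one_mul _

lemma q_integrableOn (hC : IsCopula C)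
    (hPi : ∀ u ∈ Set.Icc (0:ℝ) 1, ∀ v ∈ Set.Icc (0:ℝ) 1, u * v ≤ C u v)
    (hcont : ContinuousOn h (Set.Ioo 0 1))
    (hpos : ∀ y ∈ Set.Ioo (0:ℝ) 1, 0 < h y)
    (hBfin : IntervalIntegrable (fun y => (Real.log y) ^ 2 * h y) volume 0 1)
    {t : ℝ} (ht : t ∈ Icc (0:ℝ) 1) :
    IntegrableOn (fun y => (Real.log (C (y ^ (1 - t)) (y ^ t)) / Real.log y) *
      ((Real.log y) ^ 2 * h y)) (Ioc (0:ℝ) 1) volume := by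
  have hB : IntegrableOn (fun y => (Real.log y) ^ 2 * h y) (Ioc (0:ℝ) 1) volume :=
    (intervalIntegrable_iff_integrableOn_Ioc_of_le zero_le_one).mp hBfin
  exact Integrable.mono' hB (aesm_Ioo (q_contOn hC hPi hcont ht))
    (ae_mem_Ioo.mono fun y hy => q_bound hC hPi hpos ht hy)

end Main

section Main2

variable {C : ℝ → ℝ → ℝ} {h : ℝ → ℝ}

lemma integrand_contOn_y (hC : IsCopula C)
    (hPi : ∀ u ∈ Set.Icc (0:ℝ) 1, ∀ v ∈ Set.Icc (0:ℝ) 1, u * v ≤ C u v)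
    (hcont : ContinuousOn h (Set.Ioo 0 1)) {t : ℝ} (ht : t ∈ Icc (0:ℝ) 1) (a : ℝ) :
    ContinuousOn (fun y => (Real.log (C (y ^ (1 - t)) (y ^ t)) - a * Real.log y) ^ 2 * h y)
      (Ioo (0:ℝ) 1) := by
  have hlog : ContinuousOn Real.log (Ioo (0:ℝ) 1) :=
    fun y hy => (Real.continuousAt_log hy.1.ne').continuousWithinAt
  exact (((contOn_F_y hC hPi ht).sub (continuousOn_const.mul hlog)).pow 2).mul hcont

lemma integrand_bound (hC : IsCopula C)
    (hPi : ∀ u ∈ Set.Icc (0:ℝ) 1, ∀ v ∈ Set.Icc (0:ℝ) 1, u * v ≤ C u v)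
    (hpos : ∀ y ∈ Set.Ioo (0:ℝ) 1, 0 < h y) {t : ℝ} (ht : t ∈ Icc (0:ℝ) 1)
    {a : ℝ} (ha : |a| ≤ 1) {y : ℝ} (hy : y ∈ Ioo (0:ℝ) 1) :
    ‖(Real.log (C (y ^ (1 - t)) (y ^ t)) - a * Real.log y) ^ 2 * h y‖ ≤
      4 * ((Real.log y) ^ 2 * h y) := by
  set L := Real.log (C (y ^ (1 - t)) (y ^ t)) with hL
  have h1 : |L - a * Real.log y| ≤ 2 * |Real.log y| := by
    calc |L - a * Real.log y| ≤ |L| + |a * Real.log y| := abs_sub _ _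
      _ ≤ |Real.log y| + 1 * |Real.log y| := by
          refine add_le_add (abs_logC_le hC hPi ht hy) ?_
          rw [abs_mul]
          exact mul_le_mul_of_nonneg_right ha (abs_nonneg _)
      _ = 2 * |Real.log y| := by ring
  have h2 : (L - a * Real.log y) ^ 2 ≤ 4 * (Real.log y) ^ 2 := by
    have := abs_le.mp h1
    nlinarith [sq_abs (Real.log y), sq_nonneg (L - a * Real.log y)]
  have hh : 0 ≤ h y := (hpos y hy).le
  rw [Real.norm_eq_abs, abs_of_nonneg (mul_nonneg (sq_nonneg _) hh), ← mul_assoc]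
  exact mul_le_mul_of_nonneg_right h2 hh

lemma integrand_integrableOn (hC : IsCopula C)
    (hPi : ∀ u ∈ Set.Icc (0:ℝ) 1, ∀ v ∈ Set.Icc (0:ℝ) 1, u * v ≤ C u v)
    (hcont : ContinuousOn h (Set.Ioo 0 1))
    (hpos : ∀ y ∈ Set.Ioo (0:ℝ) 1, 0 < h y)
    (hBfin : IntervalIntegrable (fun y => (Real.log y) ^ 2 * h y) volume 0 1)
    {t : ℝ} (ht : t ∈ Icc (0:ℝ) 1) {a : ℝ} (ha : |a| ≤ 1) :
    IntegrableOn (fun y => (Real.log (C (y ^ (1 - t)) (y ^ t)) - a * Real.log y) ^ 2 * h y)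
      (Ioc (0:ℝ) 1) volume := by
  have hB : IntegrableOn (fun y => (Real.log y) ^ 2 * h y) (Ioc (0:ℝ) 1) volume :=
    (intervalIntegrable_iff_integrableOn_Ioc_of_le zero_le_one).mp hBfin
  exact Integrable.mono' (hB.const_mul 4) (aesm_Ioo (integrand_contOn_y hC hPi hcont ht a))
    (ae_mem_Ioo.mono fun y hy => integrand_bound hC hPi hpos ht ha hy)

end Main2

noncomputable def Mdist (h : ℝ → ℝ) (C : ℝ → ℝ → ℝ) (A : ℝ → ℝ) : ℝ :=
  ∫ t in (0:ℝ)..1, ∫ y in (0:ℝ)..1,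
    (Real.log (C (y ^ (1 - t)) (y ^ t)) - A t * Real.log y) ^ 2 * h y

theorem stmt7 (C : ℝ → ℝ → ℝ) (hC : IsCopula C)
    (hPi : ∀ u ∈ Set.Icc (0:ℝ) 1, ∀ v ∈ Set.Icc (0:ℝ) 1, u * v ≤ C u v)
    (h : ℝ → ℝ) (hcont : ContinuousOn h (Set.Ioo 0 1))
    (hpos : ∀ y ∈ Set.Ioo (0:ℝ) 1, 0 < h y)
    (Bh : ℝ) (hBh : Bh = ∫ y in (0:ℝ)..1, (Real.log y) ^ 2 * h y) (hBpos : 0 < Bh)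
    (hBfin : IntervalIntegrable (fun y => (Real.log y) ^ 2 * h y) volume 0 1)
    (Astar : ℝ → ℝ)
    (hAstar : ∀ t, Astar t =
      Bh⁻¹ * ∫ y in (0:ℝ)..1,
        (Real.log (C (y ^ (1 - t)) (y ^ t)) / Real.log y) * ((Real.log y) ^ 2 * h y)) :
    Mdist h C Astar = 0 ↔
      ∃ A : ℝ → ℝ, ∀ t ∈ Set.Icc (0:ℝ) 1,
        ∀ᵐ y ∂(volume.restrict (Set.Ioo (0:ℝ) 1)),
          C (y ^ (1 - t)) (y ^ t) = y ^ (A t) := by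
  have hB : IntegrableOn (fun y => (Real.log y) ^ 2 * h y) (Ioc (0:ℝ) 1) volume :=
    (intervalIntegrable_iff_integrableOn_Ioc_of_le zero_le_one).mp hBfin
  have hBset : (∫ y in Ioc (0:ℝ) 1, (Real.log y) ^ 2 * h y) = Bh := by
    rw [hBh, intervalIntegral.integral_of_le zero_le_one]
  set g : ℝ → ℝ := fun t => ∫ y in (0:ℝ)..1,
    (Real.log (C (y ^ (1 - t)) (y ^ t)) - Astar t * Real.log y) ^ 2 * h y with hg
  have hMg : Mdist h C Astar = ∫ t in (0:ℝ)..1, g t := rfl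
  -- bound on Astar
  have hAbound : ∀ t ∈ Icc (0:ℝ) 1, |Astar t| ≤ 1 := by
    intro t ht
    have hqi := q_integrableOn hC hPi hcont hpos hBfin ht
    have hI : |∫ y in (0:ℝ)..1,
        (Real.log (C (y ^ (1 - t)) (y ^ t)) / Real.log y) * ((Real.log y) ^ 2 * h y)| ≤ Bh := by
      rw [intervalIntegral.integral_of_le zero_le_one, ← Real.norm_eq_abs]
      have h1 := MeasureTheory.norm_integral_le_integral_norm
        (μ := volume.restrict (Ioc (0:ℝ) 1))
        (f := fun y => (Real.log (C (y ^ (1 - t)) (y ^ t)) / Real.log y) *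
          ((Real.log y) ^ 2 * h y))
      have h2 : (∫ y in Ioc (0:ℝ) 1,
          ‖(Real.log (C (y ^ (1 - t)) (y ^ t)) / Real.log y) * ((Real.log y) ^ 2 * h y)‖) ≤
          ∫ y in Ioc (0:ℝ) 1, (Real.log y) ^ 2 * h y :=
        integral_mono_ae hqi.norm hB (ae_mem_Ioo.mono fun y hy => q_bound hC hPi hpos ht hy)
      exact (h1.trans h2).trans hBset.le
    rw [hAstar t, abs_mul, abs_of_nonneg (inv_nonneg.mpr hBpos.le)]
    calc Bh⁻¹ * |_| ≤ Bh⁻¹ * Bh := mul_le_mul_of_nonneg_left hI (inv_nonneg.mpr hBpos.le)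
      _ = 1 := inv_mul_cancel₀ hBpos.ne'
  -- continuity of Astar on [0,1]
  have hAcont : ContinuousOn Astar (Icc (0:ℝ) 1) := by
    have h1 : ContinuousOn (fun t => Bh⁻¹ * ∫ y in Ioc (0:ℝ) 1,
        (Real.log (C (y ^ (1 - t)) (y ^ t)) / Real.log y) * ((Real.log y) ^ 2 * h y))
        (Icc (0:ℝ) 1) := by
      refine continuousOn_const.mul (continuousOn_of_dominated
        (fun t ht => aesm_Ioo (q_contOn hC hPi hcont ht))
        (fun t ht => ae_mem_Ioo.mono fun y hy => q_bound hC hPi hpos ht hy)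
        hB ?_)
      refine ae_mem_Ioo.mono fun y hy => ?_
      exact ((contOn_F_t hC hPi hy).div_const _).mul continuousOn_const
    exact h1.congr fun t ht => by
      rw [hAstar t, intervalIntegral.integral_of_le zero_le_one]
  -- nonnegativity of the integrand
  have hnn : ∀ t ∈ Icc (0:ℝ) 1, ∀ y ∈ Icc (0:ℝ) 1,
      0 ≤ (Real.log (C (y ^ (1 - t)) (y ^ t)) - Astar t * Real.log y) ^ 2 * h y := by
    intro t ht y hy
    rcases eq_or_lt_of_le hy.1 with h0 | h0
    · have hC0 : C ((0:ℝ) ^ (1 - t)) ((0:ℝ) ^ t) = 0 := by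
        by_cases h1 : t = 1
        · subst h1
          norm_num [Real.rpow_zero, Real.rpow_one]
          exact (hC.1 1 mem11).1
        · have h1t : (1:ℝ) - t ≠ 0 := sub_ne_zero.mpr (Ne.symm h1)
          rw [Real.zero_rpow h1t]
          refine (hC.2.1 ((0:ℝ) ^ t) ?_).1
          by_cases h2 : t = 0
          · subst h2; rw [Real.rpow_zero]; exact mem11
          · rw [Real.zero_rpow h2]; exact mem01
      rw [← h0, hC0, Real.log_zero]
      norm_num
    rcases eq_or_lt_of_le hy.2 with h1 | h1
    · rw [h1]
      have : C ((1:ℝ) ^ (1 - t)) ((1:ℝ) ^ t) = 1 := by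
        rw [Real.one_rpow, Real.one_rpow]
        exact (hC.2.1 1 mem11).2
      rw [this, Real.log_one]
      norm_num
    · exact mul_nonneg (sq_nonneg _) (hpos y ⟨h0, h1⟩).le
  -- continuity of g
  have hgcont : ContinuousOn g (Icc (0:ℝ) 1) := by
    have h1 : ContinuousOn (fun t => ∫ y in Ioc (0:ℝ) 1,
        (Real.log (C (y ^ (1 - t)) (y ^ t)) - Astar t * Real.log y) ^ 2 * h y)
        (Icc (0:ℝ) 1) := by
      refine continuousOn_of_dominated
        (fun t ht => aesm_Ioo (integrand_contOn_y hC hPi hcont ht (Astar t)))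
        (fun t ht => ae_mem_Ioo.mono fun y hy =>
          integrand_bound hC hPi hpos ht (hAbound t ht) hy)
        (hB.const_mul 4) ?_
      refine ae_mem_Ioo.mono fun y hy => ?_
      exact (((contOn_F_t hC hPi hy).sub (hAcont.mul continuousOn_const)).pow 2).mul
        continuousOn_const
    exact h1.congr fun t ht => intervalIntegral.integral_of_le zero_le_one
  rw [hMg]
  constructor
  · intro hM
    refine ⟨Astar, fun t ht => ?_⟩
    -- g vanishes on [0,1]
    have hgInt : IntervalIntegrable g volume 0 1 :=
      hgcont.intervalIntegrable_of_Icc zero_le_one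
    have hgnn : 0 ≤ᵐ[volume.restrict (Ioc (0:ℝ) 1)] g := by
      refine (ae_restrict_mem measurableSet_Ioc).mono fun s hs => ?_
      exact intervalIntegral.integral_nonneg zero_le_one
        fun y hy => hnn s (Ioc_subset_Icc_self hs) y hy
    have hgz : g =ᵐ[volume.restrict (Ioc (0:ℝ) 1)] 0 :=
      (intervalIntegral.integral_eq_zero_iff_of_le_of_nonneg_ae zero_le_one hgnn hgInt).mp hM
    have hgz' : g =ᵐ[volume.restrict (Icc (0:ℝ) 1)] 0 := by
      rwa [← Measure.restrict_congr_set Ioc_ae_eq_Icc]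
    have hgIcc : EqOn g 0 (Icc (0:ℝ) 1) :=
      Measure.eqOn_Icc_of_ae_eq volume (zero_ne_one) hgz' hgcont continuousOn_const
    have hgt0 : g t = 0 := hgIcc ht
    -- the inner integrand vanishes a.e.
    have hinn : 0 ≤ᵐ[volume.restrict (Ioc (0:ℝ) 1)] fun y =>
        (Real.log (C (y ^ (1 - t)) (y ^ t)) - Astar t * Real.log y) ^ 2 * h y :=
      (ae_restrict_mem measurableSet_Ioc).mono fun y hy =>
        hnn t ht y (Ioc_subset_Icc_self hy)
    have hiint : IntervalIntegrable (fun y =>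
        (Real.log (C (y ^ (1 - t)) (y ^ t)) - Astar t * Real.log y) ^ 2 * h y) volume 0 1 :=
      (intervalIntegrable_iff_integrableOn_Ioc_of_le zero_le_one).mpr
        (integrand_integrableOn hC hPi hcont hpos hBfin ht (hAbound t ht))
    have hz : (fun y => (Real.log (C (y ^ (1 - t)) (y ^ t)) - Astar t * Real.log y) ^ 2 * h y)
        =ᵐ[volume.restrict (Ioc (0:ℝ) 1)] 0 :=
      (intervalIntegral.integral_eq_zero_iff_of_le_of_nonneg_ae zero_le_one hinn hiint).mp hgt0
    rw [restrict_Ioo_eq]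
    filter_upwards [hz, ae_mem_Ioo] with y hy0 hy
    have hh := hpos y hy
    have hsq : (Real.log (C (y ^ (1 - t)) (y ^ t)) - Astar t * Real.log y) ^ 2 = 0 := by
      have : (Real.log (C (y ^ (1 - t)) (y ^ t)) - Astar t * Real.log y) ^ 2 * h y = 0 := hy0
      rcases mul_eq_zero.mp this with h' | h'
      · exact h'
      · exact absurd h' hh.ne'
    have hlin : Real.log (C (y ^ (1 - t)) (y ^ t)) = Astar t * Real.log y := by
      have := pow_eq_zero_iff (n := 2) (by norm_num) |>.mp hsq
      linarith [sub_eq_zero.mp this]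
    have hCpos : 0 < C (y ^ (1 - t)) (y ^ t) := lt_of_lt_of_le hy.1 (cop_lb hC hPi ht hy)
    conv_rhs => rw [Real.rpow_def_of_pos hy.1]
    calc C (y ^ (1 - t)) (y ^ t) = Real.exp (Real.log (C (y ^ (1 - t)) (y ^ t))) :=
          (Real.exp_log hCpos).symm
      _ = Real.exp (Real.log y * Astar t) := by rw [hlin, mul_comm]
  · rintro ⟨A, hA⟩
    have hg0 : ∀ t ∈ Icc (0:ℝ) 1, g t = 0 := by
      intro t ht
      have hAe : ∀ᵐ y ∂(volume.restrict (Ioc (0:ℝ) 1)),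
          C (y ^ (1 - t)) (y ^ t) = y ^ (A t) := by
        rw [← restrict_Ioo_eq]; exact hA t ht
      have hAstarEq : Astar t = A t := by
        rw [hAstar t, intervalIntegral.integral_of_le zero_le_one]
        have hcongr : ∫ y in Ioc (0:ℝ) 1,
            (Real.log (C (y ^ (1 - t)) (y ^ t)) / Real.log y) * ((Real.log y) ^ 2 * h y) =
            ∫ y in Ioc (0:ℝ) 1, A t * ((Real.log y) ^ 2 * h y) := by
          refine integral_congr_ae ((hAe.and ae_mem_Ioo).mono ?_)
          rintro y ⟨he, hy⟩
          simp only [he, Real.log_rpow hy.1]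
          rw [mul_div_assoc, div_self (log_ne_zero_Ioo hy), mul_one]
        rw [hcongr, MeasureTheory.integral_const_mul, hBset]
        field_simp
      have hz : (fun y =>
          (Real.log (C (y ^ (1 - t)) (y ^ t)) - Astar t * Real.log y) ^ 2 * h y)
          =ᵐ[volume.restrict (Ioc (0:ℝ) 1)] 0 := by
        refine (hAe.and ae_mem_Ioo).mono ?_
        rintro y ⟨he, hy⟩
        rw [hAstarEq]
        simp only [he, Real.log_rpow hy.1, Pi.zero_apply]
        ring
      have hgeq : g t = ∫ y in Ioc (0:ℝ) 1,
          (Real.log (C (y ^ (1 - t)) (y ^ t)) - Astar t * Real.log y) ^ 2 * h y :=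
        intervalIntegral.integral_of_le zero_le_one
      rw [hgeq, integral_congr_ae hz]; simp
    rw [intervalIntegral.integral_congr (g := fun _ => (0:ℝ))
      fun t ht => hg0 t (by rwa [uIcc_of_le zero_le_one] at ht)]
    simp
end

section
/- For the Clayton copula C_θ(u,v) = (u^{-θ} + v^{-θ} − 1)^{-1/θ} with θ > 0, and f_y(t) = C_θ(y^{1-t}, y^t) for y ∈ (0,1), the inequality (f_y'(t))² − f_y''(t) f_y(t) = θ (log y)² (C_θ(y^{1-t},y^t))^{2+2θ} (4 y^{-θ} − y^{-θ t} − y^{-θ(1-t)}) ≥ 0 holds for all (y,t) ∈ (0,1)², and consequently t ↦ −log C_θ(y^{1-t},y^t) is convex for every y ∈ (0,1). -/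
open MeasureTheory Set

/-- The Clayton copula with parameter `θ > 0`. -/
noncomputable def clayton (θ : ℝ) (u v : ℝ) : ℝ :=
  (u ^ (-θ) + v ^ (-θ) - 1) ^ (-(1/θ))

noncomputable def gfun (c s : ℝ) : ℝ :=
  Real.exp (c * s - c) + Real.exp (-(c * s)) - 1

noncomputable def gfun' (c s : ℝ) : ℝ :=
  c * (Real.exp (c * s - c) - Real.exp (-(c * s)))

lemma gfun_pos {c : ℝ} (hc : c < 0) (s : ℝ) : 0 < gfun c s := by
  have hab : Real.exp (c * s - c) * Real.exp (-(c * s)) = Real.exp (-c) := by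
    rw [← Real.exp_add]; ring_nf
  have h1 : (1:ℝ) ≤ Real.exp (-c) := Real.one_le_exp (by linarith)
  have ha := Real.exp_pos (c * s - c)
  have hb := Real.exp_pos (-(c * s))
  unfold gfun
  nlinarith [sq_nonneg (Real.exp (c * s - c) - Real.exp (-(c * s))),
    sq_nonneg (Real.exp (c * s - c) + Real.exp (-(c * s)) - 2)]

lemma hasDerivAt_gfun (c s : ℝ) : HasDerivAt (gfun c) (gfun' c s) s := by
  have h1 : HasDerivAt (fun x : ℝ => c * x - c) c s := by
    simpa using ((hasDerivAt_id s).const_mul c).sub_const c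
  have h2 : HasDerivAt (fun x : ℝ => -(c * x)) (-c) s := by
    simpa using ((hasDerivAt_id s).const_mul c).fun_neg
  have h := (h1.exp.add h2.exp).sub_const 1
  unfold gfun gfun'
  convert h using 1
  all_goals first | rfl | ring

lemma hasDerivAt_gfun' (c s : ℝ) :
    HasDerivAt (gfun' c) (c ^ 2 * (Real.exp (c * s - c) + Real.exp (-(c * s)))) s := by
  have h1 : HasDerivAt (fun x : ℝ => c * x - c) c s := by
    simpa using ((hasDerivAt_id s).const_mul c).sub_const c
  have h2 : HasDerivAt (fun x : ℝ => -(c * x)) (-c) s := by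
    simpa using ((hasDerivAt_id s).const_mul c).fun_neg
  have h := (h1.exp.sub h2.exp).const_mul c
  unfold gfun'
  convert h using 1
  all_goals first | rfl | ring

lemma clayton_eq {θ y : ℝ} (hy0 : 0 < y) (s : ℝ) :
    clayton θ (y ^ (1 - s)) (y ^ s) = gfun (θ * Real.log y) s ^ (-(1/θ)) := by
  unfold clayton gfun
  rw [← Real.rpow_mul hy0.le, ← Real.rpow_mul hy0.le,
      Real.rpow_def_of_pos hy0, Real.rpow_def_of_pos hy0]
  congr 3 <;> ring_nf

lemma hasDerivAt_F {θ c : ℝ} (hc : c < 0) (s : ℝ) :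
    HasDerivAt (fun x => gfun c x ^ (-(1/θ)))
      (gfun' c s * (-(1/θ)) * gfun c s ^ (-(1/θ) - 1)) s :=
  (hasDerivAt_gfun c s).rpow_const (Or.inl (gfun_pos hc s).ne')

lemma deriv_F {θ c : ℝ} (hc : c < 0) :
    deriv (fun x => gfun c x ^ (-(1/θ)))
      = fun s => gfun' c s * (-(1/θ)) * gfun c s ^ (-(1/θ) - 1) :=
  funext fun s => (hasDerivAt_F hc s).deriv

lemma key_eq {θ L : ℝ} (hθ : 0 < θ) (hL : L < 0) (t : ℝ) :
    (gfun' (θ * L) t * (-(1/θ)) * gfun (θ * L) t ^ (-(1/θ) - 1)) ^ 2 -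
      ((θ * L) ^ 2 * (Real.exp (θ * L * t - θ * L) + Real.exp (-(θ * L * t))) * (-(1/θ)) *
          gfun (θ * L) t ^ (-(1/θ) - 1)
        + gfun' (θ * L) t * (-(1/θ)) *
            (gfun' (θ * L) t * (-(1/θ) - 1) * gfun (θ * L) t ^ (-(1/θ) - 1 - 1)))
        * gfun (θ * L) t ^ (-(1/θ))
    = θ * L ^ 2 * (gfun (θ * L) t ^ (-(1/θ))) ^ (2 + 2 * θ) *
        (4 * Real.exp (-(θ * L)) - Real.exp (-(θ * L * t)) - Real.exp (θ * L * t - θ * L)) := by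
  have hc : θ * L < 0 := mul_neg_of_pos_of_neg hθ hL
  have hG := gfun_pos hc t
  have hab : Real.exp (θ * L * t - θ * L) * Real.exp (-(θ * L * t)) = Real.exp (-(θ * L)) := by
    rw [← Real.exp_add]; ring_nf
  have e4 : (gfun (θ * L) t ^ (-(1/θ))) ^ (2 + 2 * θ)
      = (gfun (θ * L) t ^ (-(1/θ) - 2)) ^ 2 * gfun (θ * L) t ^ 2 := by
    rw [← Real.rpow_mul hG.le,
        show -(1/θ) * (2 + 2 * θ) = (-(1/θ) - 2) + ((-(1/θ) - 2) + 2) by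
          field_simp; ring,
        Real.rpow_add hG, Real.rpow_add hG, Real.rpow_two]
    ring
  have e3 : (-(1/θ) - 1 - 1 : ℝ) = -(1/θ) - 2 := by ring
  have e1 : gfun (θ * L) t ^ (-(1/θ) - 1)
      = gfun (θ * L) t ^ (-(1/θ) - 2) * gfun (θ * L) t := by
    have h := Real.rpow_add hG (-(1/θ) - 2) 1
    rw [Real.rpow_one] at h
    rw [← h]; congr 1; ring
  have e2 : gfun (θ * L) t ^ (-(1/θ))
      = gfun (θ * L) t ^ (-(1/θ) - 2) * gfun (θ * L) t ^ 2 := by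
    have h := Real.rpow_add hG (-(1/θ) - 2) 2
    rw [Real.rpow_two] at h
    rw [← h]; congr 1; ring
  rw [e4, e3, e1, e2, ← hab]
  set X := gfun (θ * L) t ^ (-(1/θ) - 2) with hX
  unfold gfun gfun'
  have hθ' : θ ≠ 0 := hθ.ne'
  field_simp
  ring

theorem stmt10 (θ : ℝ) (hθ : 0 < θ) :
    ∀ y ∈ Set.Ioo (0:ℝ) 1, ∀ t ∈ Set.Ioo (0:ℝ) 1,
      ((deriv (fun s => clayton θ (y ^ (1 - s)) (y ^ s)) t) ^ 2 -
        deriv (deriv (fun s => clayton θ (y ^ (1 - s)) (y ^ s))) t *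
          clayton θ (y ^ (1 - t)) (y ^ t)
        = θ * (Real.log y) ^ 2 * (clayton θ (y ^ (1 - t)) (y ^ t)) ^ (2 + 2 * θ) *
            (4 * y ^ (-θ) - y ^ (-(θ * t)) - y ^ (-(θ * (1 - t)))) ∧
       0 ≤ θ * (Real.log y) ^ 2 * (clayton θ (y ^ (1 - t)) (y ^ t)) ^ (2 + 2 * θ) *
            (4 * y ^ (-θ) - y ^ (-(θ * t)) - y ^ (-(θ * (1 - t))))) ∧
    ∀ y ∈ Set.Ioo (0:ℝ) 1,
      ConvexOn ℝ (Set.Icc (0:ℝ) 1)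
        (fun t => - Real.log (clayton θ (y ^ (1 - t)) (y ^ t))) := by
  rintro y ⟨hy0, hy1⟩ t ⟨ht0, ht1⟩
  have hL : Real.log y < 0 := Real.log_neg hy0 hy1
  have hc : θ * Real.log y < 0 := mul_neg_of_pos_of_neg hθ hL
  have hG := gfun_pos hc t
  have hy1' : y ^ (-θ) = Real.exp (-(θ * Real.log y)) := by
    rw [Real.rpow_def_of_pos hy0]; ring_nf
  have hy2 : y ^ (-(θ * t)) = Real.exp (-(θ * Real.log y * t)) := by
    rw [Real.rpow_def_of_pos hy0]; ring_nf
  have hy3 : y ^ (-(θ * (1 - t))) = Real.exp (θ * Real.log y * t - θ * Real.log y) := by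
    rw [Real.rpow_def_of_pos hy0]; ring_nf
  have ha1 : 1 ≤ Real.exp (θ * Real.log y * t - θ * Real.log y) := by
    apply Real.one_le_exp
    nlinarith [mul_pos_of_neg_of_neg hc (show t - 1 < 0 by linarith)]
  have hb1 : 1 ≤ Real.exp (-(θ * Real.log y * t)) := by
    apply Real.one_le_exp
    nlinarith [mul_neg_of_neg_of_pos hc ht0]
  have hab : Real.exp (θ * Real.log y * t - θ * Real.log y) * Real.exp (-(θ * Real.log y * t))
      = Real.exp (-(θ * Real.log y)) := by
    rw [← Real.exp_add]; ring_nf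
  refine ⟨⟨?_, ?_⟩, ?_⟩
  · have hf : (fun s => clayton θ (y ^ (1 - s)) (y ^ s))
        = fun s => gfun (θ * Real.log y) s ^ (-(1/θ)) := funext fun s => clayton_eq hy0 s
    have hd2 : HasDerivAt
        (fun s => gfun' (θ * Real.log y) s * (-(1/θ)) *
          gfun (θ * Real.log y) s ^ (-(1/θ) - 1))
        ((θ * Real.log y) ^ 2 * (Real.exp (θ * Real.log y * t - θ * Real.log y) +
            Real.exp (-(θ * Real.log y * t))) * (-(1/θ)) *
            gfun (θ * Real.log y) t ^ (-(1/θ) - 1)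
          + gfun' (θ * Real.log y) t * (-(1/θ)) * (gfun' (θ * Real.log y) t * (-(1/θ) - 1) *
              gfun (θ * Real.log y) t ^ (-(1/θ) - 1 - 1))) t :=
      ((hasDerivAt_gfun' (θ * Real.log y) t).mul_const (-(1/θ))).mul
        ((hasDerivAt_gfun (θ * Real.log y) t).rpow_const (Or.inl hG.ne'))
    rw [hf, (hasDerivAt_F hc t).deriv, deriv_F hc, hd2.deriv, clayton_eq hy0 t,
        hy1', hy2, hy3]
    exact key_eq hθ hL t
  · rw [clayton_eq hy0 t, hy1', hy2, hy3]
    have h4 : 0 ≤ 4 * Real.exp (-(θ * Real.log y)) - Real.exp (-(θ * Real.log y * t)) -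
        Real.exp (θ * Real.log y * t - θ * Real.log y) := by nlinarith
    have hpow : 0 ≤ (gfun (θ * Real.log y) t ^ (-(1/θ))) ^ (2 + 2 * θ) :=
      Real.rpow_nonneg (Real.rpow_nonneg hG.le _) _
    exact mul_nonneg (mul_nonneg (mul_nonneg hθ.le (sq_nonneg _)) hpow) h4
  · rintro z ⟨hz0, hz1⟩
    have hLz : Real.log z < 0 := Real.log_neg hz0 hz1
    have hcz : θ * Real.log z < 0 := mul_neg_of_pos_of_neg hθ hLz
    have hfun : (fun t => - Real.log (clayton θ (z ^ (1 - t)) (z ^ t)))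
        = fun s => (1/θ) * Real.log (gfun (θ * Real.log z) s) := by
      funext s
      rw [clayton_eq hz0, Real.log_rpow (gfun_pos hcz s)]
      ring
    rw [hfun]
    have hD1 : ∀ s : ℝ, HasDerivAt (fun s => (1/θ) * Real.log (gfun (θ * Real.log z) s))
        ((1/θ) * (gfun' (θ * Real.log z) s / gfun (θ * Real.log z) s)) s := fun s =>
      ((hasDerivAt_gfun (θ * Real.log z) s).log (gfun_pos hcz s).ne').const_mul (1/θ)
    have hderiv : deriv (fun s => (1/θ) * Real.log (gfun (θ * Real.log z) s))
        = fun s => (1/θ) * (gfun' (θ * Real.log z) s / gfun (θ * Real.log z) s) :=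
      funext fun s => (hD1 s).deriv
    have hD2 : ∀ x : ℝ, HasDerivAt
        (fun s => (1/θ) * (gfun' (θ * Real.log z) s / gfun (θ * Real.log z) s))
        ((1/θ) * ((θ * Real.log z) ^ 2 *
            (Real.exp (θ * Real.log z * x - θ * Real.log z) + Real.exp (-(θ * Real.log z * x))) *
              gfun (θ * Real.log z) x - gfun' (θ * Real.log z) x * gfun' (θ * Real.log z) x) /
            gfun (θ * Real.log z) x ^ 2) x := fun x => by
      have := ((hasDerivAt_gfun' (θ * Real.log z) x).div (hasDerivAt_gfun (θ * Real.log z) x)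
        (gfun_pos hcz x).ne').const_mul (1/θ)
      convert this using 1
      all_goals first | rfl | ring
    have hdiff : Differentiable ℝ (fun s => (1/θ) * Real.log (gfun (θ * Real.log z) s)) :=
      fun s => (hD1 s).differentiableAt
    apply convexOn_of_deriv2_nonneg (convex_Icc 0 1) hdiff.continuous.continuousOn
      hdiff.differentiableOn
    · rw [hderiv]
      exact (Differentiable.differentiableOn (fun x => (hD2 x).differentiableAt))
    · intro x hx
      rw [interior_Icc] at hx
      have hxy : deriv^[2] (fun s => (1/θ) * Real.log (gfun (θ * Real.log z) s)) x
          = deriv (deriv (fun s => (1/θ) * Real.log (gfun (θ * Real.log z) s))) x := by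
        simp [Function.iterate_succ_apply']
      rw [hxy, hderiv, (hD2 x).deriv]
      have ha1 : 1 ≤ Real.exp (θ * Real.log z * x - θ * Real.log z) := by
        apply Real.one_le_exp
        nlinarith [mul_pos_of_neg_of_neg hcz (show x - 1 < 0 by linarith [hx.2])]
      have hb1 : 1 ≤ Real.exp (-(θ * Real.log z * x)) := by
        apply Real.one_le_exp
        nlinarith [mul_neg_of_neg_of_pos hcz hx.1]
      apply div_nonneg _ (sq_nonneg _)
      apply mul_nonneg (by positivity : (0:ℝ) ≤ 1/θ)
      unfold gfun gfun'
      nlinarith [mul_nonneg (sq_nonneg (θ * Real.log z))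
        (show (0:ℝ) ≤ 4 * Real.exp (θ * Real.log z * x - θ * Real.log z) *
            Real.exp (-(θ * Real.log z * x)) - Real.exp (θ * Real.log z * x - θ * Real.log z) -
            Real.exp (-(θ * Real.log z * x)) by
          nlinarith [mul_nonneg (by linarith : (0:ℝ) ≤ Real.exp (θ * Real.log z * x - θ * Real.log z) - 1)
            (by linarith : (0:ℝ) ≤ Real.exp (-(θ * Real.log z * x)) - 1)])]
end

section
/- For a ∈ ℝ with a + μ > 0, μ ≥ 0, and ν ∈ [0,1): ∫₀¹ (y^a − 𝟙{y > e^{-1}}) y^{μ-1} (−log y)^{-ν} dy = Γ(1−ν)/(a+μ)^{1−ν} − ∫₀¹ e^{-μx} x^{-ν} dx. -/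
open MeasureTheory intervalIntegral

theorem stmt13 (a μ ν : ℝ) (hsum : 0 < a + μ) (hμ : 0 ≤ μ)
    (hν : ν ∈ Set.Ico (0:ℝ) 1) :
    ∫ y in (0:ℝ)..1,
        (y ^ a - (if y > Real.exp (-1) then (1:ℝ) else 0)) * y ^ (μ - 1) *
          (-Real.log y) ^ (-ν)
      = Real.Gamma (1 - ν) / (a + μ) ^ (1 - ν)
        - ∫ x in (0:ℝ)..1, Real.exp (-(μ * x)) * x ^ (-ν) := by
  obtain ⟨hν0, hν1⟩ := hν
  -- image of Ioi 0 under x ↦ exp (-x)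
  have himg : (fun x : ℝ => Real.exp (-x)) '' Set.Ioi 0 = Set.Ioo 0 1 := by
    ext y
    constructor
    · rintro ⟨x, hx, rfl⟩
      exact ⟨Real.exp_pos _, by
        rw [Real.exp_lt_one_iff]; simpa using hx⟩
    · rintro ⟨hy0, hy1⟩
      exact ⟨-Real.log y, by simpa using Real.log_neg hy0 hy1, by
        simp [Real.exp_log hy0]⟩
  -- change of variables
  have hsub : ∀ g : ℝ → ℝ, ∫ y in Set.Ioo (0:ℝ) 1, g y =
      ∫ x in Set.Ioi (0:ℝ), Real.exp (-x) * g (Real.exp (-x)) := by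
    intro g
    have hderiv : ∀ x ∈ Set.Ioi (0:ℝ),
        HasDerivWithinAt (fun x : ℝ => Real.exp (-x)) (-Real.exp (-x)) (Set.Ioi 0) x := by
      intro x _
      have : HasDerivAt (fun x : ℝ => Real.exp (-x)) (Real.exp (-x) * (-1)) x :=
        (Real.hasDerivAt_exp (-x)).comp x (hasDerivAt_neg x)
      simpa using this.hasDerivWithinAt
    have hinj : Set.InjOn (fun x : ℝ => Real.exp (-x)) (Set.Ioi 0) := by
      intro u _ v _ h
      have := Real.exp_injective h
      linarith
    have := MeasureTheory.integral_image_eq_integral_abs_deriv_smul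
      measurableSet_Ioi hderiv hinj g
    rw [himg] at this
    rw [this]
    refine setIntegral_congr_fun measurableSet_Ioi fun x _ => ?_
    rw [abs_neg, abs_of_pos (Real.exp_pos _), smul_eq_mul]
  -- pointwise identity after substitution
  have key : ∀ x ∈ Set.Ioi (0:ℝ),
      Real.exp (-x) * ((Real.exp (-x) ^ a -
          (if Real.exp (-x) > Real.exp (-1) then (1:ℝ) else 0)) *
          Real.exp (-x) ^ (μ - 1) * (-Real.log (Real.exp (-x))) ^ (-ν))
        = Real.exp (-((a + μ) * x)) * x ^ (-ν)
          - (if x < 1 then Real.exp (-(μ * x)) * x ^ (-ν) else 0) := by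
    intro x hx
    have hlog : -Real.log (Real.exp (-x)) = x := by simp
    have hif : (Real.exp (-x) > Real.exp (-1)) ↔ x < 1 := by
      rw [gt_iff_lt, Real.exp_lt_exp]; constructor <;> intro <;> linarith
    rw [hlog, ← Real.exp_mul, ← Real.exp_mul]
    split_ifs with h h' h'
    · rw [← hif] at h'; ring_nf; rw [← Real.exp_add, ← Real.exp_add, ← Real.exp_add]
      ring_nf
    · exact absurd (hif.mp h) h'
    · exact absurd (hif.mpr h') h
    · ring_nf; rw [← Real.exp_add, ← Real.exp_add]; ring_nf
  -- integrability of the two pieces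
  have hmeas : Measurable fun x : ℝ => Real.exp (-((a + μ) * x)) * x ^ (-ν) := by
    fun_prop
  have I1 : IntegrableOn (fun x : ℝ => Real.exp (-((a + μ) * x)) * x ^ (-ν))
      (Set.Ioi 0) := by
    have := integrableOn_rpow_mul_exp_neg_mul_rpow (p := 1) (s := -ν) (b := a + μ)
      (by linarith) one_pos hsum
    refine (this.congr_fun (fun x hx => ?_) measurableSet_Ioi)
    simp only [Real.rpow_one]; rw [mul_comm, neg_mul]
  have I2' : IntegrableOn (fun x : ℝ => Real.exp (-(μ * x)) * x ^ (-ν))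
      (Set.Ioo 0 1) := by
    have hrpow : IntegrableOn (fun x : ℝ => x ^ (-ν)) (Set.Ioo 0 1) := by
      have := (intervalIntegral.intervalIntegrable_rpow' (a := 0) (b := 1)
        (r := -ν) (by linarith)).1
      exact this.mono Set.Ioo_subset_Ioc_self le_rfl
    refine hrpow.mono' ?_ ?_
    · apply Measurable.aestronglyMeasurable; fun_prop
    · refine (ae_restrict_iff' measurableSet_Ioo).mpr (ae_of_all _ fun x hx => ?_)
      have hx0 : 0 < x := hx.1
      have h1 : Real.exp (-(μ * x)) ≤ 1 := by
        rw [Real.exp_le_one_iff]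
        nlinarith
      have h2 : (0:ℝ) ≤ x ^ (-ν) := Real.rpow_nonneg hx0.le _
      rw [Real.norm_eq_abs, abs_of_nonneg (by positivity)]
      nlinarith [Real.exp_pos (-(μ * x))]
  have I2 : IntegrableOn
      (fun x : ℝ => if x < 1 then Real.exp (-(μ * x)) * x ^ (-ν) else 0)
      (Set.Ioi 0) := by
    have : (fun x : ℝ => if x < 1 then Real.exp (-(μ * x)) * x ^ (-ν) else 0)
        = Set.indicator (Set.Iio 1) (fun x => Real.exp (-(μ * x)) * x ^ (-ν)) := by
      ext x; simp [Set.indicator_apply, Set.mem_Iio]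
    rw [this, IntegrableOn, integrable_indicator_iff measurableSet_Iio, IntegrableOn,
      Measure.restrict_restrict measurableSet_Iio, Set.Iio_inter_Ioi]
    exact I2'
  -- the Gamma integral
  have hG : ∫ x in Set.Ioi (0:ℝ), Real.exp (-((a + μ) * x)) * x ^ (-ν)
      = Real.Gamma (1 - ν) / (a + μ) ^ (1 - ν) := by
    have := Real.integral_rpow_mul_exp_neg_mul_Ioi (a := 1 - ν) (r := a + μ)
      (by linarith) hsum
    rw [show (1 : ℝ) - ν - 1 = -ν by ring] at this
    rw [setIntegral_congr_fun measurableSet_Ioi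
      (fun x _ => mul_comm (Real.exp (-((a + μ) * x))) (x ^ (-ν))), this,
      one_div, Real.inv_rpow hsum.le]
    ring
  -- the truncated integral
  have hT : ∫ x in Set.Ioi (0:ℝ),
      (if x < 1 then Real.exp (-(μ * x)) * x ^ (-ν) else 0)
      = ∫ x in (0:ℝ)..1, Real.exp (-(μ * x)) * x ^ (-ν) := by
    have : (fun x : ℝ => if x < 1 then Real.exp (-(μ * x)) * x ^ (-ν) else 0)
        = Set.indicator (Set.Iio 1) (fun x => Real.exp (-(μ * x)) * x ^ (-ν)) := by
      ext x; simp [Set.indicator_apply, Set.mem_Iio]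
    rw [this, setIntegral_indicator measurableSet_Iio, Set.Ioi_inter_Iio,
      intervalIntegral.integral_of_le zero_le_one,
      MeasureTheory.integral_Ioc_eq_integral_Ioo]
  -- put everything together
  rw [intervalIntegral.integral_of_le zero_le_one,
    MeasureTheory.integral_Ioc_eq_integral_Ioo, hsub, ← hG, ← hT,
    ← MeasureTheory.integral_sub I1 I2]
  exact setIntegral_congr_fun measurableSet_Ioi key
end

section
/- Let (𝔻,d) be a metric space, and let X_n, X_{i,n}: Ω → 𝔻 (i,n ∈ ℕ) be arbitrary maps and X_i, X: Ω → 𝔻 Borel-measurable maps. Suppose: (i) for every i, X_{i,n} converges weakly (in the Hoffmann–Jørgensen sense, using outer expectations) to X_i as n → ∞; (ii) X_i converges weakly to X as i → ∞; (iii) for every ε > 0, lim_{i→∞} limsup_{n→∞} ℙ*(d(X_{i,n}, X_n) > ε) = 0, where ℙ* denotes outer probability. Then X_n converges weakly to X as n → ∞. -/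
open MeasureTheory Filter Topology

variable {Ω : Type*} [MeasurableSpace Ω] {D : Type*} [MetricSpace D] [MeasurableSpace D] [BorelSpace D]

/-- Outer expectation `E*[f]` of a (possibly nonmeasurable) real function `f`
with respect to a measure `P`: the infimum of integrals of measurable
integrable functions dominating `f`. -/
noncomputable def outerExp (P : MeasureTheory.Measure Ω) (f : Ω → ℝ) : ℝ :=
  sInf {r : ℝ | ∃ g : Ω → ℝ, Measurable g ∧ (∀ ω, f ω ≤ g ω) ∧
    MeasureTheory.Integrable g P ∧ (∫ ω, g ω ∂P) = r}

/-- Weak convergence in the Hoffmann–Jørgensen sense, along a filter `l`: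
outer expectations of bounded continuous functionals converge. -/
def WeakConvHJ {ι : Type*} (l : Filter ι) (P : MeasureTheory.Measure Ω)
    (X : ι → Ω → D) (Y : Ω → D) : Prop :=
  ∀ f : D → ℝ, Continuous f → (∃ M : ℝ, ∀ x, |f x| ≤ M) →
    Tendsto (fun n => outerExp P (fun ω => f (X n ω))) l
      (nhds (∫ ω, f (Y ω) ∂P))

namespace Stmt16Aux

/-- The set whose infimum defines `outerExp`. -/
def oeSet (P : MeasureTheory.Measure Ω) (f : Ω → ℝ) : Set ℝ :=
  {r : ℝ | ∃ g : Ω → ℝ, Measurable g ∧ (∀ ω, f ω ≤ g ω) ∧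
    MeasureTheory.Integrable g P ∧ (∫ ω, g ω ∂P) = r}

lemma outerExp_def (P : MeasureTheory.Measure Ω) (f : Ω → ℝ) :
    outerExp P f = sInf (oeSet P f) := rfl

variable (P : MeasureTheory.Measure Ω) [IsProbabilityMeasure P]

lemma integrable_of_bound (h : Ω → ℝ) (hm : Measurable h) (M : ℝ) (hb : ∀ ω, |h ω| ≤ M) :
    Integrable h P :=
  (integrable_const M).mono' hm.aestronglyMeasurable
    (Filter.Eventually.of_forall fun ω => by simpa using hb ω)

lemma oe_mem_const {f : Ω → ℝ} {M : ℝ} (hM : ∀ ω, f ω ≤ M) : M ∈ oeSet P f := by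
  refine ⟨fun _ => M, measurable_const, hM, integrable_const M, ?_⟩
  simp [integral_const]

lemma oe_nonempty {f : Ω → ℝ} {M : ℝ} (hM : ∀ ω, f ω ≤ M) : (oeSet P f).Nonempty :=
  ⟨M, oe_mem_const P hM⟩

lemma oe_mem_lower {f : Ω → ℝ} {c : ℝ} (hc : ∀ ω, c ≤ f ω) :
    ∀ r ∈ oeSet P f, c ≤ r := by
  rintro r ⟨g, hgm, hgd, hgi, rfl⟩
  have : (∫ _ω, c ∂P) ≤ ∫ ω, g ω ∂P :=
    integral_mono (integrable_const c) hgi (fun ω => (hc ω).trans (hgd ω))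
  simpa [integral_const] using this

lemma oe_bddBelow {f : Ω → ℝ} {c : ℝ} (hc : ∀ ω, c ≤ f ω) : BddBelow (oeSet P f) :=
  ⟨c, fun r hr => oe_mem_lower P hc r hr⟩

lemma outerExp_le_of_mem {f : Ω → ℝ} {c : ℝ} (hc : ∀ ω, c ≤ f ω) {r : ℝ}
    (hr : r ∈ oeSet P f) : outerExp P f ≤ r :=
  csInf_le (oe_bddBelow P hc) hr

lemma outerExp_eq_integral {f : Ω → ℝ} (hm : Measurable f) {M : ℝ} (hb : ∀ ω, |f ω| ≤ M) :
    outerExp P f = ∫ ω, f ω ∂P := by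
  have hi : Integrable f P := integrable_of_bound P f hm M hb
  refine le_antisymm ?_ ?_
  · exact outerExp_le_of_mem P (c := -M) (fun ω => neg_le_of_abs_le (hb ω))
      ⟨f, hm, fun ω => le_rfl, hi, rfl⟩
  · refine le_csInf (oe_nonempty P (M := M) (fun ω => le_of_abs_le (hb ω))) ?_
    rintro r ⟨g, hgm, hgd, hgi, rfl⟩
    exact integral_mono hi hgi hgd

/-- One-sided affine transformation inequality for `outerExp`. -/
lemma outerExp_affine_le {f : Ω → ℝ} {a b M : ℝ} (ha : 0 < a) (hM : ∀ ω, |f ω| ≤ M) :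
    outerExp P (fun ω => a * f ω + b) ≤ a * outerExp P f + b := by
  have hlow : ∀ ω, -(a * M + |b|) ≤ a * f ω + b := by
    intro ω
    have h1 : -M ≤ f ω := neg_le_of_abs_le (hM ω)
    have h2 : -|b| ≤ b := neg_abs_le b
    nlinarith [hM ω]
  have key : ∀ r ∈ oeSet P f, outerExp P (fun ω => a * f ω + b) ≤ a * r + b := by
    rintro r ⟨g, hgm, hgd, hgi, rfl⟩
    refine outerExp_le_of_mem P hlow ⟨fun ω => a * g ω + b, ?_, ?_, ?_, ?_⟩
    · exact ((measurable_const.mul hgm).add measurable_const)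
    · intro ω
      have h := hgd ω
      show a * f ω + b ≤ a * g ω + b
      nlinarith
    · exact (hgi.const_mul a).add (integrable_const b)
    · rw [integral_add ((hgi.const_mul a)) (integrable_const b), integral_const_mul]
      simp [integral_const]
  have hne : (oeSet P f).Nonempty := oe_nonempty P (M := M) (fun ω => le_of_abs_le (hM ω))
  have : (outerExp P (fun ω => a * f ω + b) - b) / a ≤ outerExp P f := by
    refine le_csInf hne ?_
    intro r hr
    have := key r hr
    rw [div_le_iff₀ ha]
    linarith
  rw [div_le_iff₀ ha] at this
  linarith

lemma outerExp_affine {f : Ω → ℝ} {a b M : ℝ} (ha : 0 < a) (hM : ∀ ω, |f ω| ≤ M) :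
    outerExp P (fun ω => a * f ω + b) = a * outerExp P f + b := by
  refine le_antisymm (outerExp_affine_le P ha hM) ?_
  have hM' : ∀ ω, |a * f ω + b| ≤ a * M + |b| := by
    intro ω
    have := hM ω
    have h1 : |a * f ω| = a * |f ω| := by rw [abs_mul, abs_of_pos ha]
    calc |a * f ω + b| ≤ |a * f ω| + |b| := abs_add_le _ _
      _ ≤ a * M + |b| := by rw [h1]; nlinarith [abs_nonneg (f ω)]
  have h2 := outerExp_affine_le P (f := fun ω => a * f ω + b) (a := a⁻¹) (b := -b * a⁻¹)
    (inv_pos.2 ha) hM'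
  have hfe : (fun ω => a⁻¹ * (a * f ω + b) + -b * a⁻¹) = f := by
    funext ω
    field_simp
    ring
  rw [hfe] at h2
  have ha' : a ≠ 0 := ne_of_gt ha
  have := mul_le_mul_of_nonneg_left h2 (le_of_lt ha)
  calc a * outerExp P f + b
      ≤ a * (a⁻¹ * outerExp P (fun ω => a * f ω + b) + -b * a⁻¹) + b := by linarith
    _ = outerExp P (fun ω => a * f ω + b) := by field_simp; ring

/-- Superadditivity-type bound: if `φ + ψ ≥ 1` pointwise then
`outerExp φ + outerExp ψ ≥ 1`. -/
lemma one_le_outerExp_add {φ ψ : Ω → ℝ}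
    (hφ1 : ∀ ω, φ ω ≤ 1) (hψ1 : ∀ ω, ψ ω ≤ 1)
    (hsum : ∀ ω, 1 ≤ φ ω + ψ ω) :
    1 ≤ outerExp P φ + outerExp P ψ := by
  have hφne := oe_nonempty P (M := 1) hφ1
  have hψne := oe_nonempty P (M := 1) hψ1
  have key : ∀ r ∈ oeSet P φ, ∀ s ∈ oeSet P ψ, 1 ≤ r + s := by
    rintro r ⟨g1, h1m, h1d, h1i, rfl⟩ s ⟨g2, h2m, h2d, h2i, rfl⟩
    have : (∫ _ω, (1:ℝ) ∂P) ≤ ∫ ω, g1 ω + g2 ω ∂P := by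
      refine integral_mono (integrable_const 1) (h1i.add h2i) ?_
      intro ω
      have := hsum ω
      have := h1d ω
      have := h2d ω
      simp only [Pi.le_def]
      linarith
    rw [integral_add h1i h2i] at this
    simpa [integral_const] using this
  have h1 : 1 - outerExp P ψ ≤ outerExp P φ := by
    refine le_csInf hφne ?_
    intro r hr
    have : 1 - r ≤ outerExp P ψ := by
      refine le_csInf hψne ?_
      intro s hs
      have := key r hr s hs
      linarith
    linarith
  linarith

/-- `P A ≤ E*[φ]` when `0 ≤ φ ≤ 1` and `φ = 1` on `A`. -/
lemma measure_le_outerExp {φ : Ω → ℝ} (hφ0 : ∀ ω, 0 ≤ φ ω) (hφ1 : ∀ ω, φ ω ≤ 1)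
    {A : Set Ω} (hA : ∀ ω ∈ A, φ ω = 1) :
    P A ≤ ENNReal.ofReal (outerExp P φ) := by
  have htr : (P A).toReal ≤ outerExp P φ := by
    refine le_csInf (oe_nonempty P (M := 1) hφ1) ?_
    rintro r ⟨g, hgm, hgd, hgi, rfl⟩
    have hg0 : ∀ ω, 0 ≤ g ω := fun ω => (hφ0 ω).trans (hgd ω)
    set B : Set Ω := {ω | 1 ≤ g ω} with hB
    have hBm : MeasurableSet B := hgm measurableSet_Ici
    have hAB : A ⊆ B := by
      intro ω hω
      have := hgd ω
      have := hA ω hω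
      simp only [hB, Set.mem_setOf_eq]
      linarith
    have hind : ∫ ω, B.indicator (fun _ => (1:ℝ)) ω ∂P ≤ ∫ ω, g ω ∂P := by
      refine integral_mono ((integrable_const (1:ℝ)).indicator hBm) hgi ?_
      intro ω
      by_cases hω : ω ∈ B
      · simpa [Set.indicator_of_mem hω] using (show 1 ≤ g ω from hω)
      · simpa [Set.indicator_of_notMem hω] using hg0 ω
    rw [integral_indicator_const (1:ℝ) hBm, smul_eq_mul, mul_one] at hind
    calc (P A).toReal ≤ (P B).toReal :=
          ENNReal.toReal_mono (measure_ne_top P B) (measure_mono hAB)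
      _ ≤ ∫ ω, g ω ∂P := hind
  calc P A = ENNReal.ofReal ((P A).toReal) := (ENNReal.ofReal_toReal (measure_ne_top P A)).symm
    _ ≤ ENNReal.ofReal (outerExp P φ) := ENNReal.ofReal_le_ofReal htr

/-- Key approximation lemma: to bound a quantity by `P (Y ⁻¹' F)` for a closed
nonempty `F`, it suffices to bound it by `∫ f ∘ Y` for all continuous `[0,1]`-valued
`f` that are `1` on `F`. -/
lemma le_measure_closed (Y : Ω → D) (hY : Measurable Y)
    (F : Set D) (hF : IsClosed F) (hFne : F.Nonempty) {l : ENNReal}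
    (hl : ∀ f : D → ℝ, Continuous f → (∀ x, 0 ≤ f x) → (∀ x, f x ≤ 1) →
      (∀ x ∈ F, f x = 1) → l ≤ ENNReal.ofReal (∫ ω, f (Y ω) ∂P)) :
    l ≤ P (Y ⁻¹' F) := by
  set fk : ℕ → D → ℝ := fun k x => max 0 (1 - ((k:ℝ) + 1) * Metric.infDist x F) with hfk
  have hfkc : ∀ k, Continuous (fk k) := fun k =>
    continuous_const.max (continuous_const.sub (continuous_const.mul
      (Metric.continuous_infDist_pt F)))
  have hfk0 : ∀ k x, 0 ≤ fk k x := fun k x => le_max_left _ _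
  have hfk1 : ∀ k x, fk k x ≤ 1 := by
    intro k x
    have h1 : (0:ℝ) ≤ ((k:ℝ) + 1) * Metric.infDist x F :=
      mul_nonneg (by positivity) Metric.infDist_nonneg
    simp only [hfk, max_le_iff]
    constructor <;> linarith
  have hfkF : ∀ k, ∀ x ∈ F, fk k x = 1 := by
    intro k x hx
    simp [hfk, Metric.infDist_zero_of_mem hx]
  -- pointwise convergence to the indicator
  have hptw : ∀ ω, Tendsto (fun k => fk k (Y ω)) atTop
      (𝓝 ((Y ⁻¹' F).indicator (fun _ => (1:ℝ)) ω)) := by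
    intro ω
    by_cases hω : ω ∈ Y ⁻¹' F
    · have : ∀ k, fk k (Y ω) = 1 := fun k => hfkF k _ hω
      simp only [Set.indicator_of_mem hω]
      simpa [this] using tendsto_const_nhds (x := (1:ℝ)) (f := (atTop : Filter ℕ))
    · have hd : 0 < Metric.infDist (Y ω) F :=
        (hF.notMem_iff_infDist_pos hFne).1 hω
      simp only [Set.indicator_of_notMem hω]
      refine tendsto_const_nhds.congr' ?_
      filter_upwards [eventually_ge_atTop ⌈1 / Metric.infDist (Y ω) F⌉₊] with k hk
      have h1 : (1:ℝ) / Metric.infDist (Y ω) F ≤ (k:ℝ) := by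
        calc (1:ℝ) / Metric.infDist (Y ω) F ≤ (⌈1 / Metric.infDist (Y ω) F⌉₊ : ℝ) :=
              Nat.le_ceil _
          _ ≤ (k:ℝ) := by exact_mod_cast hk
      have h2 : (1:ℝ) ≤ ((k:ℝ) + 1) * Metric.infDist (Y ω) F := by
        rw [div_le_iff₀ hd] at h1
        nlinarith
      simp only [hfk]
      rw [eq_comm, max_eq_left]
      linarith
  -- dominated convergence
  have hDCT : Tendsto (fun k => ∫ ω, fk k (Y ω) ∂P) atTop
      (𝓝 (∫ ω, (Y ⁻¹' F).indicator (fun _ => (1:ℝ)) ω ∂P)) := by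
    refine tendsto_integral_of_dominated_convergence (fun _ => (1:ℝ)) ?_ (integrable_const 1)
      ?_ ?_
    · exact fun k => ((hfkc k).measurable.comp hY).aestronglyMeasurable
    · intro k
      refine Filter.Eventually.of_forall fun ω => ?_
      rw [Real.norm_eq_abs, abs_of_nonneg (hfk0 k _)]
      exact hfk1 k _
    · exact Filter.Eventually.of_forall hptw
  have hFm : MeasurableSet (Y ⁻¹' F) := hY hF.measurableSet
  rw [integral_indicator_const (1:ℝ) hFm, smul_eq_mul, mul_one] at hDCT
  have hof : Tendsto (fun k => ENNReal.ofReal (∫ ω, fk k (Y ω) ∂P)) atTop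
      (𝓝 (ENNReal.ofReal ((P (Y ⁻¹' F)).toReal))) :=
    (ENNReal.continuous_ofReal.tendsto _).comp hDCT
  rw [ENNReal.ofReal_toReal (measure_ne_top P _)] at hof
  exact ge_of_tendsto' hof (fun k => hl (fk k) (hfkc k) (hfk0 k) (hfk1 k) (hfkF k))


lemma sum_boole_lower {k : ℕ} (hk : 0 < k) {t : ℝ} (ht0 : 0 ≤ t) (ht1 : t ≤ 1) :
    t ≤ 1/(k:ℝ) + (1/(k:ℝ)) * ∑ j ∈ Finset.Icc 1 k, (if (j:ℝ)/(k:ℝ) ≤ t then (1:ℝ) else 0) := by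
  have hk' : (0:ℝ) < (k:ℝ) := by exact_mod_cast hk
  have hkt0 : 0 ≤ (k:ℝ) * t := mul_nonneg hk'.le ht0
  set m := ⌊(k:ℝ) * t⌋₊ with hm
  have hmk : m ≤ k := Nat.floor_le_of_le (by nlinarith)
  set S := ∑ j ∈ Finset.Icc 1 k, (if (j:ℝ)/(k:ℝ) ≤ t then (1:ℝ) else 0) with hS
  have hcard : (m:ℝ) ≤ S := by
    have hsub2 : Finset.Icc 1 m ⊆ Finset.Icc 1 k := by
      intro j hj
      rw [Finset.mem_Icc] at hj ⊢
      exact ⟨hj.1, hj.2.trans hmk⟩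
    have h1 : ∀ j ∈ Finset.Icc 1 m, (if (j:ℝ)/(k:ℝ) ≤ t then (1:ℝ) else 0) = 1 := by
      intro j hj
      rw [Finset.mem_Icc] at hj
      have hjm : (j:ℝ) ≤ (k:ℝ) * t := (Nat.le_floor_iff hkt0).1 (hm ▸ hj.2)
      rw [if_pos]
      rw [div_le_iff₀ hk']
      linarith [mul_comm t (k:ℝ)]
    calc (m:ℝ) = ∑ _j ∈ Finset.Icc 1 m, (1:ℝ) := by simp [Nat.card_Icc]
      _ = ∑ j ∈ Finset.Icc 1 m, (if (j:ℝ)/(k:ℝ) ≤ t then (1:ℝ) else 0) :=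
          (Finset.sum_congr rfl h1).symm
      _ ≤ S := by
          rw [hS]
          refine Finset.sum_le_sum_of_subset_of_nonneg hsub2 ?_
          intro j _ _
          split <;> norm_num
  have hfloor : (k:ℝ) * t - 1 < (m:ℝ) := Nat.sub_one_lt_floor _
  have h2 : t ≤ (1 + S)/(k:ℝ) := by
    rw [le_div_iff₀ hk']
    nlinarith
  have h3 : (1 + S)/(k:ℝ) = 1/(k:ℝ) + (1/(k:ℝ)) * S := by ring
  linarith

lemma sum_boole_upper {k : ℕ} (hk : 0 < k) {t : ℝ} (ht0 : 0 ≤ t) :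
    (1/(k:ℝ)) * ∑ j ∈ Finset.Icc 1 k, (if (j:ℝ)/(k:ℝ) ≤ t then (1:ℝ) else 0) ≤ t := by
  have hk' : (0:ℝ) < (k:ℝ) := by exact_mod_cast hk
  have hkt0 : 0 ≤ (k:ℝ) * t := mul_nonneg hk'.le ht0
  set m := ⌊(k:ℝ) * t⌋₊ with hm
  set S := ∑ j ∈ Finset.Icc 1 k, (if (j:ℝ)/(k:ℝ) ≤ t then (1:ℝ) else 0) with hS
  have hcard : S ≤ (m:ℝ) := by
    have hle : ∀ j ∈ Finset.Icc 1 k, (if (j:ℝ)/(k:ℝ) ≤ t then (1:ℝ) else 0) ≤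
        (if j ∈ Finset.Icc 1 m then (1:ℝ) else 0) := by
      intro j hj
      rw [Finset.mem_Icc] at hj
      by_cases hc : (j:ℝ)/(k:ℝ) ≤ t
      · rw [if_pos hc, if_pos]
        rw [Finset.mem_Icc]
        refine ⟨hj.1, ?_⟩
        rw [div_le_iff₀ hk'] at hc
        exact Nat.le_floor (by linarith [mul_comm t (k:ℝ)])
      · rw [if_neg hc]
        split <;> norm_num
    calc S ≤ ∑ j ∈ Finset.Icc 1 k, (if j ∈ Finset.Icc 1 m then (1:ℝ) else 0) :=
          Finset.sum_le_sum hle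
      _ = ∑ _j ∈ Finset.Icc 1 k ∩ Finset.Icc 1 m, (1:ℝ) := Finset.sum_ite_mem _ _ _
      _ ≤ ∑ _j ∈ Finset.Icc 1 m, (1:ℝ) := by
          refine Finset.sum_le_sum_of_subset_of_nonneg Finset.inter_subset_right ?_
          intro j _ _
          norm_num
      _ = (m:ℝ) := by simp [Nat.card_Icc]
  have hfl : (m:ℝ) ≤ (k:ℝ) * t := Nat.floor_le hkt0
  rw [one_div, inv_mul_le_iff₀ hk']
  nlinarith

lemma partA (X : ℕ → Ω → D) (Xlim : Ω → D) (hXlim : Measurable Xlim)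
    (hcl : ∀ F : Set D, IsClosed F →
      limsup (fun n => P (X n ⁻¹' F)) atTop ≤ P (Xlim ⁻¹' F)) :
    WeakConvHJ atTop P X Xlim := by
  -- Step 1: upper bound for [0,1]-valued continuous g
  have hU : ∀ g : D → ℝ, Continuous g → (∀ x, 0 ≤ g x) → (∀ x, g x ≤ 1) →
      ∀ δ : ℝ, 0 < δ →
      ∀ᶠ n in atTop, outerExp P (fun ω => g (X n ω)) ≤ (∫ ω, g (Xlim ω) ∂P) + δ := by
    intro g hgc hg0 hg1 δ hδ
    obtain ⟨k0, hk0⟩ := exists_nat_one_div_lt (show (0:ℝ) < δ/2 by linarith)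
    set k := k0 + 1 with hkdef
    have hk : 0 < k := Nat.succ_pos _
    have hk' : (0:ℝ) < (k:ℝ) := by exact_mod_cast hk
    have hkδ : 1/(k:ℝ) < δ/2 := by
      have : ((k:ℝ)) = (k0:ℝ) + 1 := by exact_mod_cast rfl
      rw [this]; exact hk0
    set F : ℕ → Set D := fun j => g ⁻¹' (Set.Ici ((j:ℝ)/(k:ℝ))) with hF
    have hFc : ∀ j, IsClosed (F j) := fun j => isClosed_Ici.preimage hgc
    set p : ℕ → ENNReal := fun j => P (Xlim ⁻¹' F j) with hp
    have hgXlim_int : Integrable (fun ω => g (Xlim ω)) P :=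
      integrable_of_bound P _ (hgc.measurable.comp hXlim) 1
        (fun ω => abs_le.2 ⟨by linarith [hg0 (Xlim ω)], hg1 (Xlim ω)⟩)
    -- eventual bound from the closed-set condition
    have hev : ∀ᶠ n in atTop, ∀ j ∈ Finset.Icc 1 k,
        P (X n ⁻¹' F j) ≤ p j + ENNReal.ofReal (δ/4) := by
      rw [Finset.eventually_all]
      intro j _
      have hlt : limsup (fun n => P (X n ⁻¹' F j)) atTop < p j + ENNReal.ofReal (δ/4) :=
        lt_of_le_of_lt (hcl (F j) (hFc j))
          (ENNReal.lt_add_right (measure_ne_top P _)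
            (ne_of_gt (ENNReal.ofReal_pos.2 (by linarith))))
      filter_upwards [eventually_lt_of_limsup_lt hlt] with n hn using hn.le
    filter_upwards [hev] with n hn
    -- choose measurable supersets
    choose B hB1 hB2 hB3 using fun j => MeasureTheory.exists_measurable_superset P (X n ⁻¹' F j)
    set h : Ω → ℝ := fun ω =>
      1/(k:ℝ) + (1/(k:ℝ)) * ∑ j ∈ Finset.Icc 1 k, (B j).indicator (fun _ => (1:ℝ)) ω with hh
    have hInd_int : ∀ j ∈ Finset.Icc 1 k,
        Integrable ((B j).indicator (fun _ => (1:ℝ))) P :=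
      fun j _ => (integrable_const (1:ℝ)).indicator (hB2 j)
    have hsum_int : Integrable (fun ω =>
        ∑ j ∈ Finset.Icc 1 k, (B j).indicator (fun _ => (1:ℝ)) ω) P :=
      integrable_finset_sum _ hInd_int
    have hh_int : Integrable h P := by
      refine (integrable_const (1/(k:ℝ))).add ?_
      exact hsum_int.const_mul _
    have hh_meas : Measurable h := by
      refine measurable_const.add (measurable_const.mul ?_)
      exact Finset.measurable_sum _ (fun j _ => measurable_const.indicator (hB2 j))
    have hdom : ∀ ω, g (X n ω) ≤ h ω := by
      intro ω
      have key := sum_boole_lower (t := g (X n ω)) hk (hg0 _) (hg1 _)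
      have hterm : ∀ j ∈ Finset.Icc 1 k,
          (if (j:ℝ)/(k:ℝ) ≤ g (X n ω) then (1:ℝ) else 0) ≤
            (B j).indicator (fun _ => (1:ℝ)) ω := by
        intro j _
        by_cases hc : (j:ℝ)/(k:ℝ) ≤ g (X n ω)
        · have hmem : ω ∈ X n ⁻¹' F j := by
            simp only [hF, Set.mem_preimage, Set.mem_Ici]
            exact hc
          rw [if_pos hc, Set.indicator_of_mem (hB1 j hmem)]
        · rw [if_neg hc]
          exact Set.indicator_nonneg (fun _ _ => zero_le_one) ω
      have hsum_le := Finset.sum_le_sum hterm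
      have := mul_le_mul_of_nonneg_left hsum_le (by positivity : (0:ℝ) ≤ 1/(k:ℝ))
      simp only [hh]
      linarith
    have hoe : outerExp P (fun ω => g (X n ω)) ≤ ∫ ω, h ω ∂P :=
      outerExp_le_of_mem P (c := 0) (fun ω => hg0 _) ⟨h, hh_meas, hdom, hh_int, rfl⟩
    have hint_h : ∫ ω, h ω ∂P =
        1/(k:ℝ) + (1/(k:ℝ)) * ∑ j ∈ Finset.Icc 1 k, (P (B j)).toReal := by
      simp only [hh]
      rw [integral_add (integrable_const _) (hsum_int.const_mul _), integral_const,
        integral_const_mul, integral_finset_sum _ hInd_int]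
      have : ∀ j ∈ Finset.Icc 1 k,
          ∫ ω, (B j).indicator (fun _ => (1:ℝ)) ω ∂P = (P (B j)).toReal := by
        intro j _
        rw [integral_indicator_const (1:ℝ) (hB2 j), smul_eq_mul, mul_one, measureReal_def]
      rw [Finset.sum_congr rfl this]
      simp
    have hsum_bound : ∑ j ∈ Finset.Icc 1 k, (P (B j)).toReal ≤
        (∑ j ∈ Finset.Icc 1 k, (p j).toReal) + (k:ℝ) * (δ/4) := by
      have hje : ∀ j ∈ Finset.Icc 1 k, (P (B j)).toReal ≤ (p j).toReal + δ/4 := by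
        intro j hj
        rw [hB3 j]
        have h1 := hn j hj
        have h2 : ((p j) + ENNReal.ofReal (δ/4)).toReal = (p j).toReal + δ/4 := by
          rw [ENNReal.toReal_add (measure_ne_top P _) ENNReal.ofReal_ne_top,
            ENNReal.toReal_ofReal (by linarith)]
        calc (P (X n ⁻¹' F j)).toReal ≤ ((p j) + ENNReal.ofReal (δ/4)).toReal :=
              ENNReal.toReal_mono (by
                exact ENNReal.add_ne_top.2 ⟨measure_ne_top P _, ENNReal.ofReal_ne_top⟩) h1
          _ = (p j).toReal + δ/4 := h2
      calc ∑ j ∈ Finset.Icc 1 k, (P (B j)).toReal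
          ≤ ∑ j ∈ Finset.Icc 1 k, ((p j).toReal + δ/4) := Finset.sum_le_sum hje
        _ = (∑ j ∈ Finset.Icc 1 k, (p j).toReal) + (k:ℝ) * (δ/4) := by
            rw [Finset.sum_add_distrib, Finset.sum_const, Nat.card_Icc]
            simp [nsmul_eq_mul]
    have hlevel : (1/(k:ℝ)) * ∑ j ∈ Finset.Icc 1 k, (p j).toReal ≤ ∫ ω, g (Xlim ω) ∂P := by
      have heq : (1/(k:ℝ)) * ∑ j ∈ Finset.Icc 1 k, (p j).toReal =
          ∫ ω, (1/(k:ℝ)) * ∑ j ∈ Finset.Icc 1 k,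
            (Xlim ⁻¹' F j).indicator (fun _ => (1:ℝ)) ω ∂P := by
        rw [integral_const_mul, integral_finset_sum _
          (fun j _ => (integrable_const (1:ℝ)).indicator (hXlim (hFc j).measurableSet))]
        congr 1
        refine Finset.sum_congr rfl (fun j _ => ?_)
        rw [integral_indicator_const (1:ℝ) (hXlim (hFc j).measurableSet), smul_eq_mul, mul_one, measureReal_def]
      rw [heq]
      refine integral_mono ?_ hgXlim_int ?_
      · exact (integrable_finset_sum _
          (fun j _ => (integrable_const (1:ℝ)).indicator (hXlim (hFc j).measurableSet))).const_mul _
      · intro ω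
        have hind_eq : ∀ j ∈ Finset.Icc 1 k,
            (Xlim ⁻¹' F j).indicator (fun _ => (1:ℝ)) ω =
              (if (j:ℝ)/(k:ℝ) ≤ g (Xlim ω) then (1:ℝ) else 0) := by
          intro j _
          by_cases hc : (j:ℝ)/(k:ℝ) ≤ g (Xlim ω)
          · rw [if_pos hc, Set.indicator_of_mem]
            simpa [hF] using hc
          · rw [if_neg hc, Set.indicator_of_notMem]
            simpa [hF] using hc
        show (1/(k:ℝ)) * ∑ j ∈ Finset.Icc 1 k,
            (Xlim ⁻¹' F j).indicator (fun _ => (1:ℝ)) ω ≤ g (Xlim ω)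
        rw [Finset.sum_congr rfl hind_eq]
        exact sum_boole_upper hk (hg0 _)
    have hfin : (1/(k:ℝ)) * ((∑ j ∈ Finset.Icc 1 k, (p j).toReal) + (k:ℝ) * (δ/4)) =
        (1/(k:ℝ)) * (∑ j ∈ Finset.Icc 1 k, (p j).toReal) + δ/4 := by
      field_simp
    calc outerExp P (fun ω => g (X n ω)) ≤ ∫ ω, h ω ∂P := hoe
      _ = 1/(k:ℝ) + (1/(k:ℝ)) * ∑ j ∈ Finset.Icc 1 k, (P (B j)).toReal := hint_h
      _ ≤ 1/(k:ℝ) + (1/(k:ℝ)) *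
            ((∑ j ∈ Finset.Icc 1 k, (p j).toReal) + (k:ℝ) * (δ/4)) := by
          have := mul_le_mul_of_nonneg_left hsum_bound (by positivity : (0:ℝ) ≤ 1/(k:ℝ))
          linarith
      _ = 1/(k:ℝ) + ((1/(k:ℝ)) * (∑ j ∈ Finset.Icc 1 k, (p j).toReal) + δ/4) := by
          rw [hfin]
      _ ≤ 1/(k:ℝ) + ((∫ ω, g (Xlim ω) ∂P) + δ/4) := by linarith
      _ ≤ (∫ ω, g (Xlim ω) ∂P) + δ := by linarith
  -- Step 2: two-sided convergence for [0,1]-valued g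
  have h01 : ∀ g : D → ℝ, Continuous g → (∀ x, 0 ≤ g x) → (∀ x, g x ≤ 1) →
      Tendsto (fun n => outerExp P (fun ω => g (X n ω))) atTop
        (𝓝 (∫ ω, g (Xlim ω) ∂P)) := by
    intro g hgc hg0 hg1
    set I := ∫ ω, g (Xlim ω) ∂P with hI
    have hgXlim_int : Integrable (fun ω => g (Xlim ω)) P :=
      integrable_of_bound P _ (hgc.measurable.comp hXlim) 1
        (fun ω => abs_le.2 ⟨by linarith [hg0 (Xlim ω)], hg1 (Xlim ω)⟩)
    have hg'c : Continuous (fun x => 1 - g x) := continuous_const.sub hgc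
    have hg'0 : ∀ x, 0 ≤ 1 - g x := fun x => by linarith [hg1 x]
    have hg'1 : ∀ x, 1 - g x ≤ 1 := fun x => by linarith [hg0 x]
    have hI' : (∫ ω, 1 - g (Xlim ω) ∂P) = 1 - I := by
      rw [integral_sub (integrable_const 1) hgXlim_int]
      simp [integral_const, hI]
    rw [Metric.tendsto_atTop]
    intro ε hε
    have hup := hU g hgc hg0 hg1 (ε/2) (by linarith)
    have hup' := hU (fun x => 1 - g x) hg'c hg'0 hg'1 (ε/2) (by linarith)
    rw [hI'] at hup'
    have hlow : ∀ n, 1 ≤ outerExp P (fun ω => g (X n ω)) +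
        outerExp P (fun ω => 1 - g (X n ω)) := fun n =>
      one_le_outerExp_add P (fun ω => hg1 _) (fun ω => hg'1 _) (fun ω => by linarith)
    obtain ⟨N, hN⟩ := (hup.and hup').exists_forall_of_atTop
    refine ⟨N, fun n hn => ?_⟩
    obtain ⟨hn1, hn2⟩ := hN n hn
    have h2 : I - ε/2 ≤ outerExp P (fun ω => g (X n ω)) := by
      have := hlow n
      linarith
    have hn1' : outerExp P (fun ω => g (X n ω)) ≤ I + ε/2 := by rw [hI]; exact hn1
    rw [Real.dist_eq, abs_lt]
    exact ⟨by linarith, by linarith⟩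
  -- Step 3: general bounded continuous f via affine transformation
  intro f hfc ⟨M, hM⟩
  set c := |M| + 1 with hc
  have hc0 : (0:ℝ) < c := by positivity
  have hfb : ∀ x, |f x| ≤ |M| := fun x => (hM x).trans (le_abs_self M)
  set g : D → ℝ := fun x => (f x + c) / (2 * c) with hg
  have hgc : Continuous g := (hfc.add continuous_const).div_const _
  have hg0 : ∀ x, 0 ≤ g x := by
    intro x
    have := abs_le.1 (hfb x)
    apply div_nonneg _ (by positivity)
    simp only [hc]
    linarith [this.1]
  have hg1 : ∀ x, g x ≤ 1 := by
    intro x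
    have := abs_le.1 (hfb x)
    rw [hg, div_le_one (by positivity)]
    simp only [hc]
    linarith [this.2]
  have hgb : ∀ ω' : D, |g ω'| ≤ 1 := fun x => abs_le.2 ⟨by linarith [hg0 x], hg1 x⟩
  have hT := h01 g hgc hg0 hg1
  have haff : ∀ n, outerExp P (fun ω => f (X n ω)) =
      2 * c * outerExp P (fun ω => g (X n ω)) + (-c) := by
    intro n
    have heq : (fun ω => f (X n ω)) = (fun ω => 2 * c * g (X n ω) + (-c)) := by
      funext ω
      rw [hg]
      field_simp
      ring
    rw [heq]
    exact outerExp_affine P (M := 1) (by positivity) (fun ω => hgb _)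
  have hint : ∫ ω, f (Xlim ω) ∂P = 2 * c * (∫ ω, g (Xlim ω) ∂P) + (-c) := by
    have hgXlim_int : Integrable (fun ω => g (Xlim ω)) P :=
      integrable_of_bound P _ (hgc.measurable.comp hXlim) 1 (fun ω => hgb _)
    have heq : (fun ω => f (Xlim ω)) = (fun ω => 2 * c * g (Xlim ω) + (-c)) := by
      funext ω
      rw [hg]
      field_simp
      ring
    rw [heq, integral_add (hgXlim_int.const_mul _) (integrable_const _),
      integral_const_mul, integral_const]
    simp
  have := (hT.const_mul (2 * c)).add_const (-c)
  rw [hint]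
  simp only [haff]
  exact this


lemma ennreal_limsup_add_le (u v : ℕ → ENNReal) :
    limsup (fun n => u n + v n) atTop ≤ limsup u atTop + limsup v atTop := by
  by_cases htop : limsup u atTop + limsup v atTop = ⊤
  · rw [htop]; exact le_top
  have hu_ne : limsup u atTop ≠ ⊤ := fun h => htop (by simp [h])
  have hv_ne : limsup v atTop ≠ ⊤ := fun h => htop (by simp [h])
  refine ENNReal.le_of_forall_pos_le_add fun ε hε _ => ?_
  have hhalf : ((ε : ENNReal)/2) ≠ 0 :=
    (ENNReal.half_pos (by exact_mod_cast hε.ne')).ne'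
  have hu : ∀ᶠ n in atTop, u n < limsup u atTop + (ε : ENNReal)/2 :=
    eventually_lt_of_limsup_lt (ENNReal.lt_add_right hu_ne hhalf)
  have hv : ∀ᶠ n in atTop, v n < limsup v atTop + (ε : ENNReal)/2 :=
    eventually_lt_of_limsup_lt (ENNReal.lt_add_right hv_ne hhalf)
  refine limsup_le_of_le (by isBoundedDefault) ?_
  filter_upwards [hu, hv] with n h1 h2
  calc u n + v n ≤ (limsup u atTop + (ε : ENNReal)/2) + (limsup v atTop + (ε : ENNReal)/2) :=
        add_le_add h1.le h2.le
    _ = limsup u atTop + limsup v atTop + ((ε : ENNReal)/2 + (ε : ENNReal)/2) := by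
        ring
    _ = limsup u atTop + limsup v atTop + (ε : ENNReal) := by rw [ENNReal.add_halves]

lemma partB (X : ℕ → Ω → D) (Xin : ℕ → ℕ → Ω → D) (Xi : ℕ → Ω → D) (Xlim : Ω → D)
    (hXi : ∀ i, Measurable (Xi i)) (hXlim : Measurable Xlim)
    (h1 : ∀ i : ℕ, WeakConvHJ atTop P (fun n => Xin i n) (Xi i))
    (h2 : WeakConvHJ atTop P Xi Xlim)
    (h3 : ∀ ε : ℝ, 0 < ε → Tendsto (fun i : ℕ => Filter.limsup (fun n : ℕ =>
        P.toOuterMeasure {ω | ε < dist (Xin i n ω) (X n ω)}) atTop) atTop (nhds 0)) :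
    ∀ F : Set D, IsClosed F →
      limsup (fun n => P (X n ⁻¹' F)) atTop ≤ P (Xlim ⁻¹' F) := by
  intro F hF
  rcases F.eq_empty_or_nonempty with rfl | hFne
  · simp [Filter.limsup_const]
  set L := limsup (fun n => P (X n ⁻¹' F)) atTop with hL
  have key : ∀ ε : ℝ, 0 < ε → L ≤ P (Xlim ⁻¹' Metric.cthickening ε F) := by
    intro ε hε
    set Fε := Metric.cthickening ε F with hFε
    have hFεc : IsClosed Fε := Metric.isClosed_cthickening
    have hFεne : Fε.Nonempty := hFne.mono (Metric.self_subset_cthickening F)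
    -- each approximating sequence satisfies the closed-set bound for `Xi i`
    have B1 : ∀ i, limsup (fun n => P (Xin i n ⁻¹' Fε)) atTop ≤ P (Xi i ⁻¹' Fε) := by
      intro i
      refine le_measure_closed P (Xi i) (hXi i) Fε hFεc hFεne ?_
      intro f hfc hf0 hf1 hfF
      have hfb : ∃ M : ℝ, ∀ x, |f x| ≤ M :=
        ⟨1, fun x => abs_le.2 ⟨by linarith [hf0 x], hf1 x⟩⟩
      have ht := h1 i f hfc hfb
      have hb : ∀ n, P (Xin i n ⁻¹' Fε) ≤
          ENNReal.ofReal (outerExp P (fun ω => f (Xin i n ω))) := by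
        intro n
        exact measure_le_outerExp P (fun ω => hf0 _) (fun ω => hf1 _) (fun ω hω => hfF _ hω)
      calc limsup (fun n => P (Xin i n ⁻¹' Fε)) atTop
          ≤ limsup (fun n => ENNReal.ofReal (outerExp P (fun ω => f (Xin i n ω)))) atTop :=
            limsup_le_limsup (Filter.Eventually.of_forall hb)
        _ = ENNReal.ofReal (∫ ω, f (Xi i ω) ∂P) :=
            ((ENNReal.continuous_ofReal.tendsto _).comp ht).limsup_eq
    -- the limits `Xi i` satisfy the closed-set bound for `Xlim`
    have B2 : limsup (fun i => P (Xi i ⁻¹' Fε)) atTop ≤ P (Xlim ⁻¹' Fε) := by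
      refine le_measure_closed P Xlim hXlim Fε hFεc hFεne ?_
      intro f hfc hf0 hf1 hfF
      have hfb : ∃ M : ℝ, ∀ x, |f x| ≤ M :=
        ⟨1, fun x => abs_le.2 ⟨by linarith [hf0 x], hf1 x⟩⟩
      have ht := h2 f hfc hfb
      have heq : ∀ i, outerExp P (fun ω => f (Xi i ω)) = ∫ ω, f (Xi i ω) ∂P := fun i =>
        outerExp_eq_integral P (hfc.measurable.comp (hXi i)) (M := 1)
          (fun ω => abs_le.2 ⟨by linarith [hf0 (Xi i ω)], hf1 (Xi i ω)⟩)
      have ht' : Tendsto (fun i => ∫ ω, f (Xi i ω) ∂P) atTop (𝓝 (∫ ω, f (Xlim ω) ∂P)) :=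
        ht.congr (fun i => heq i)
      have hb : ∀ i, P (Xi i ⁻¹' Fε) ≤ ENNReal.ofReal (∫ ω, f (Xi i ω) ∂P) := by
        intro i
        have hint : Integrable (fun ω => f (Xi i ω)) P :=
          integrable_of_bound P _ (hfc.measurable.comp (hXi i)) 1
            (fun ω => abs_le.2 ⟨by linarith [hf0 (Xi i ω)], hf1 (Xi i ω)⟩)
        have hmono : ∫ ω, (Xi i ⁻¹' Fε).indicator (fun _ => (1:ℝ)) ω ∂P ≤
            ∫ ω, f (Xi i ω) ∂P := by
          refine integral_mono
            ((integrable_const (1:ℝ)).indicator ((hXi i) hFεc.measurableSet)) hint ?_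
          intro ω
          by_cases hω : ω ∈ Xi i ⁻¹' Fε
          · rw [Set.indicator_of_mem hω]
            exact le_of_eq (hfF _ hω).symm
          · rw [Set.indicator_of_notMem hω]
            exact hf0 _
        rw [integral_indicator_const (1:ℝ) ((hXi i) hFεc.measurableSet), smul_eq_mul,
          mul_one] at hmono
        calc P (Xi i ⁻¹' Fε) = ENNReal.ofReal ((P (Xi i ⁻¹' Fε)).toReal) :=
              (ENNReal.ofReal_toReal (measure_ne_top P _)).symm
          _ ≤ ENNReal.ofReal (∫ ω, f (Xi i ω) ∂P) := ENNReal.ofReal_le_ofReal hmono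
      calc limsup (fun i => P (Xi i ⁻¹' Fε)) atTop
          ≤ limsup (fun i => ENNReal.ofReal (∫ ω, f (Xi i ω) ∂P)) atTop :=
            limsup_le_limsup (Filter.Eventually.of_forall hb)
        _ = ENNReal.ofReal (∫ ω, f (Xlim ω) ∂P) :=
            ((ENNReal.continuous_ofReal.tendsto _).comp ht').limsup_eq
    -- split along the approximation
    set c : ℕ → ENNReal := fun i =>
      limsup (fun n => P {ω | ε < dist (Xin i n ω) (X n ω)}) atTop with hc
    have hc0 : Tendsto c atTop (𝓝 0) := by
      have := h3 ε hε
      simpa [Measure.coe_toOuterMeasure] using this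
    have hsplit : ∀ i, L ≤ c i + P (Xi i ⁻¹' Fε) := by
      intro i
      have hincl : ∀ n, X n ⁻¹' F ⊆
          {ω | ε < dist (Xin i n ω) (X n ω)} ∪ Xin i n ⁻¹' Fε := by
        intro n ω hω
        by_cases hd : ε < dist (Xin i n ω) (X n ω)
        · exact Or.inl hd
        · exact Or.inr (Metric.mem_cthickening_of_dist_le _ _ _ _ hω (le_of_not_gt hd))
      have hmeas : ∀ n, P (X n ⁻¹' F) ≤
          P {ω | ε < dist (Xin i n ω) (X n ω)} + P (Xin i n ⁻¹' Fε) := fun n =>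
        (measure_mono (hincl n)).trans (measure_union_le _ _)
      calc L ≤ limsup (fun n => P {ω | ε < dist (Xin i n ω) (X n ω)} +
              P (Xin i n ⁻¹' Fε)) atTop :=
            limsup_le_limsup (Filter.Eventually.of_forall hmeas)
        _ ≤ c i + limsup (fun n => P (Xin i n ⁻¹' Fε)) atTop := ennreal_limsup_add_le _ _
        _ ≤ c i + P (Xi i ⁻¹' Fε) := add_le_add_right (B1 i) _
    calc L ≤ liminf (fun i => c i + P (Xi i ⁻¹' Fε)) atTop :=
          le_liminf_of_le (by isBoundedDefault) (Filter.Eventually.of_forall hsplit)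
      _ ≤ limsup (fun i => c i + P (Xi i ⁻¹' Fε)) atTop := liminf_le_limsup
      _ ≤ limsup c atTop + limsup (fun i => P (Xi i ⁻¹' Fε)) atTop :=
          ennreal_limsup_add_le _ _
      _ = 0 + limsup (fun i => P (Xi i ⁻¹' Fε)) atTop := by rw [hc0.limsup_eq]
      _ ≤ P (Xlim ⁻¹' Fε) := by rw [zero_add]; exact B2
  -- let the thickening shrink
  set μ' := P.map Xlim with hμ'
  have : IsProbabilityMeasure μ' := Measure.isProbabilityMeasure_map hXlim.aemeasurable
  have hμeq : ∀ ε : ℝ, μ' (Metric.cthickening ε F) = P (Xlim ⁻¹' Metric.cthickening ε F) :=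
    fun ε => Measure.map_apply hXlim Metric.isClosed_cthickening.measurableSet
  have htm : Tendsto (fun r : ℝ => μ' (Metric.cthickening r F)) (𝓝 0) (𝓝 (μ' F)) :=
    tendsto_measure_cthickening_of_isClosed ⟨1, one_pos, measure_ne_top μ' _⟩ hF
  have hseq : Tendsto (fun m : ℕ => μ' (Metric.cthickening (1/((m:ℝ)+1)) F)) atTop
      (𝓝 (μ' F)) := htm.comp tendsto_one_div_add_atTop_nhds_zero_nat
  have hLle : ∀ m : ℕ, L ≤ μ' (Metric.cthickening (1/((m:ℝ)+1)) F) := by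
    intro m
    rw [hμeq]
    exact key _ (by positivity)
  have hfin := ge_of_tendsto' hseq hLle
  rwa [hμ', Measure.map_apply hXlim hF.measurableSet] at hfin

end Stmt16Aux

open Stmt16Aux in
theorem stmt16 (P : MeasureTheory.Measure Ω) [MeasureTheory.IsProbabilityMeasure P]
    (X : ℕ → Ω → D) (Xin : ℕ → ℕ → Ω → D) (Xi : ℕ → Ω → D) (Xlim : Ω → D)
    (hXi : ∀ i, Measurable (Xi i)) (hXlim : Measurable Xlim)
    (h1 : ∀ i : ℕ, WeakConvHJ atTop P (fun n => Xin i n) (Xi i))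
    (h2 : WeakConvHJ atTop P Xi Xlim)
    (h3 : ∀ ε : ℝ, 0 < ε →
      Tendsto (fun i : ℕ =>
        Filter.limsup (fun n : ℕ =>
          P.toOuterMeasure {ω | ε < dist (Xin i n ω) (X n ω)}) atTop)
        atTop (nhds 0)) :
    WeakConvHJ atTop P X Xlim :=
  Stmt16Aux.partA P X Xlim hXlim (Stmt16Aux.partB P X Xin Xi Xlim hXi hXlim h1 h2 h3)
end
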